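/- arXiv:1804.08512 — 6 statements merged into one kernel-verified Lean document; each statement's English description precedes it below -/
import Mathlib

section
/- Let G ∈ H^∞_{m×p} with T_G T_G* strictly positive, and let Ξ₀ and Θ₀ be the associated matrices. Then G₀ Ξ₀ = I_m and G₀ Θ₀ = 0, where G₀ = G(0). -/
/-!
Setting: `l2 n` models ℓ²₊(ℂⁿ); `lp.single 2 0` is the canonical embedding `E_n`, and
evaluating a sequence at coordinate `k` realizes `E_n* (S_n*)^k`.  Block Toeplitz and
Hankel operators, as well as the (bounded) inverse of `T_G T_G*`, are specified through
their actions on the standard basis vectors of the coordinate spaces.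
-/

noncomputable section
open scoped Matrix

/-- ℂⁿ with the Euclidean norm. -/
abbrev ES (n : ℕ) : Type := EuclideanSpace ℂ (Fin n)

/-- ℓ²₊(ℂⁿ). -/
abbrev l2 (n : ℕ) : Type := lp (fun _ : ℕ => ES n) 2

/-- The `b`-th standard basis vector of ℂⁿ. -/
abbrev eVec (n : ℕ) (b : Fin n) : ES n := EuclideanSpace.single b 1

/-- The matrix function `z ↦ ∑' ν, z ^ ν • F ν` determined by a coefficient sequence. -/
def seriesM {r s : ℕ} (F : ℕ → Matrix (Fin r) (Fin s) ℂ) (z : ℂ) :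
    Matrix (Fin r) (Fin s) ℂ :=
  Matrix.of fun a b => ∑' ν : ℕ, z ^ ν * F ν a b

open scoped ComplexConjugate InnerProductSpace

/-- A coordinate of an `l2` element as an inner product with an embedded basis vector. -/
lemma l2_coord_eq_inner (n : ℕ) (u : l2 n) (i : ℕ) (a : Fin n) :
    u i a = ⟪(lp.single 2 i (eVec n a) : l2 n), u⟫_ℂ := by
  rw [lp.inner_single_left, EuclideanSpace.inner_single_left]
  simp

/-- Key structural fact: the zeroth block-coordinate of `T_G x` only depends on `x 0`,
through the matrix `G 0`. -/
lemma TG_zero_coord (m p : ℕ) (G : ℕ → Matrix (Fin m) (Fin p) ℂ)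
    (TG : l2 p →L[ℂ] l2 m)
    (hTG : ∀ (j : ℕ) (b : Fin p) (i : ℕ) (a : Fin m),
      (TG (lp.single 2 j (eVec p b))) i a = if j ≤ i then G (i - j) a b else 0)
    (x : l2 p) (a : Fin m) :
    (TG x) 0 a = ∑ c, G 0 a c * x 0 c := by
  have hv : TG.adjoint (lp.single 2 0 (eVec m a))
      = (lp.single 2 0 (show ES p from WithLp.toLp 2 fun c => conj (G 0 a c)) : l2 p) := by
    refine lp.ext (funext fun j => PiLp.ext fun b => ?_)
    have h1 : (TG.adjoint (lp.single 2 0 (eVec m a))) j b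
        = conj ((TG (lp.single 2 j (eVec p b))) 0 a) := by
      rw [l2_coord_eq_inner p _ j b, ContinuousLinearMap.adjoint_inner_right,
        lp.inner_single_right, EuclideanSpace.inner_single_right]
      simp
    rw [h1, hTG]
    rcases Nat.eq_zero_or_pos j with hj | hj
    · subst hj
      rw [lp.single_apply_self]
      simp
    · rw [lp.single_apply_ne _ _ _ (by omega)]
      simp [Nat.not_le.mpr hj]
  rw [l2_coord_eq_inner m (TG x) 0 a, ← ContinuousLinearMap.adjoint_inner_left, hv,
    lp.inner_single_left, PiLp.inner_apply]
  simp [RCLike.inner_apply]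
  exact Finset.sum_congr rfl fun _ _ => mul_comm _ _

/-- If `G ∈ H^∞_{m×p}` and `T_G T_G*` is strictly positive (i.e. boundedly
invertible, with inverse `Tinv`), and `Ξ₀ = E_p* T_G* (T_G T_G*)⁻¹ E_m`,
`Θ₀ Θ₀* = I_p - E_p* T_G* (T_G T_G*)⁻¹ T_G E_p` with `ker Θ₀ = 0`, then
`G₀ Ξ₀ = I_m` and `G₀ Θ₀ = 0`, where `G₀ = G(0)`. -/
theorem bezout_corona_stmt0
    (m p k : ℕ) (hm : 0 < m) (hmp : m ≤ p)
    (G : ℕ → Matrix (Fin m) (Fin p) ℂ)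
    (TG : l2 p →L[ℂ] l2 m)
    (hTG : ∀ (j : ℕ) (b : Fin p) (i : ℕ) (a : Fin m),
      (TG (lp.single 2 j (eVec p b))) i a = if j ≤ i then G (i - j) a b else 0)
    (Tinv : l2 m →L[ℂ] l2 m)
    (hT1 : ∀ x, Tinv (TG (TG.adjoint x)) = x)
    (hT2 : ∀ x, TG (TG.adjoint (Tinv x)) = x)
    (Ξ₀ : Matrix (Fin p) (Fin m) ℂ)
    (hΞ₀ : ∀ (a : Fin p) (b : Fin m),
      Ξ₀ a b = (TG.adjoint (Tinv (lp.single 2 0 (eVec m b)))) 0 a)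
    (Θ₀ : Matrix (Fin p) (Fin k) ℂ)
    (hΘ₀ker : ∀ w : Fin k → ℂ, Θ₀.mulVec w = 0 → w = 0)
    (hΘ₀ : ∀ (a b : Fin p), (Θ₀ * Θ₀ᴴ) a b
      = (if a = b then 1 else 0) - (TG.adjoint (Tinv (TG (lp.single 2 0 (eVec p b))))) 0 a) :
    G 0 * Ξ₀ = 1 ∧ G 0 * Θ₀ = 0 := by
  have key := TG_zero_coord m p G TG hTG
  constructor
  · ext a b
    rw [Matrix.mul_apply]
    simp_rw [fun c => hΞ₀ c b]
    rw [← key (TG.adjoint (Tinv (lp.single 2 0 (eVec m b)))) a, hT2,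
      lp.single_apply_self]
    by_cases hab : a = b <;>
      simp [Matrix.one_apply, EuclideanSpace.single_apply, hab, eq_comm]
  · have hz : G 0 * (Θ₀ * Θ₀ᴴ) = 0 := by
      ext a b
      rw [Matrix.mul_apply]
      simp_rw [hΘ₀, mul_sub]
      rw [Finset.sum_sub_distrib]
      have h1 : ∑ c, G 0 a c * (if c = b then (1 : ℂ) else 0) = G 0 a b := by
        simp [mul_ite]
      have h2 : ∑ c, G 0 a c *
          (TG.adjoint (Tinv (TG (lp.single 2 0 (eVec p b))))) 0 c = G 0 a b := by
        rw [← key (TG.adjoint (Tinv (TG (lp.single 2 0 (eVec p b))))) a, hT2, hTG]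
        simp
      rw [h1, h2]
      simp
    have hz' : Θ₀ * (G 0 * Θ₀)ᴴ = 0 := by
      have : (G 0 * Θ₀) * Θ₀ᴴ = 0 := by rw [Matrix.mul_assoc]; exact hz
      have h := congrArg Matrix.conjTranspose this
      simpa [Matrix.conjTranspose_mul] using h
    ext a j
    have hcol : Θ₀.mulVec (fun i => (G 0 * Θ₀)ᴴ i a) = 0 := by
      funext i
      have := congrFun (congrFun hz' i) a
      rw [Matrix.mul_apply] at this
      simpa [Matrix.mulVec, dotProduct] using this
    have := congrFun (hΘ₀ker _ hcol) j
    simp only [Matrix.conjTranspose_apply, Pi.zero_apply] at this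
    simpa using (star_eq_zero.mp this)
end
end

section
/- Let G ∈ H^∞_{m×p} with T_G T_G* strictly positive and let Y be the associated p×p matrix function on 𝔻. Then G(z) Y(z) = G₀ for every z ∈ 𝔻, where G₀ = G(0). -/
/-!
Setting: `l2 n` models ℓ²₊(ℂⁿ); `lp.single 2 0` is the canonical embedding `E_n`, and
evaluating a sequence at coordinate `k` realizes `E_n* (S_n*)^k`.  Block Toeplitz and
Hankel operators, as well as the (bounded) inverse of `T_G T_G*`, are specified through
their actions on the standard basis vectors of the coordinate spaces.
-/

noncomputable section
open scoped Matrix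

lemma lp_single_add {n : ℕ} (j : ℕ) (a b : ES n) :
    (lp.single 2 j (a + b) : l2 n) = lp.single 2 j a + lp.single 2 j b := by
  apply lp.ext
  funext k
  by_cases h : k = j
  · subst h
    simp [lp.coeFn_add, lp.single_apply_self]
  · simp [lp.coeFn_add, lp.single_apply_ne 2 j _ h]

/-- `lp.single` as a linear map. -/
def singleLM (n : ℕ) (j : ℕ) : ES n →ₗ[ℂ] l2 n where
  toFun v := lp.single 2 j v
  map_add' a b := lp_single_add j a b
  map_smul' c a := by simpa using lp.single_smul 2 j a c

lemma singleLM_apply {n : ℕ} (j : ℕ) (v : ES n) :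
    singleLM n j v = lp.single 2 j v := by
  simp [singleLM]

lemma inner_single_coord {n : ℕ} (i : ℕ) (a : Fin n) (y : l2 n) :
    @inner ℂ _ _ (lp.single 2 i (eVec n a) : l2 n) y = y i a := by
  rw [lp.inner_single_left]
  simp [EuclideanSpace.inner_single_left]

lemma norm_lp_single_eVec {n : ℕ} (i : ℕ) (a : Fin n) :
    ‖(lp.single 2 i (eVec n a) : l2 n)‖ = 1 := by
  have := lp.norm_single (p := 2) (E := fun _ : ℕ => ES n) (by norm_num)
    i (eVec n a)
  simpa [EuclideanSpace.norm_single] using this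

lemma coord_le_norm {n : ℕ} (y : l2 n) (i : ℕ) (a : Fin n) : ‖y i a‖ ≤ ‖y‖ := by
  have h := norm_inner_le_norm (𝕜 := ℂ) (lp.single 2 i (eVec n a)) y
  rw [inner_single_coord] at h
  simpa [norm_lp_single_eVec] using h

lemma toeplitz_apply (m p : ℕ) (G : ℕ → Matrix (Fin m) (Fin p) ℂ)
    (TG : l2 p →L[ℂ] l2 m)
    (hTG : ∀ (j : ℕ) (b : Fin p) (i : ℕ) (a : Fin m),
      (TG (lp.single 2 j (eVec p b))) i a = if j ≤ i then G (i - j) a b else 0)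
    (x : l2 p) (n : ℕ) (a : Fin m) :
    (TG x) n a = ∑ j ∈ Finset.range (n + 1), ∑ c, G (n - j) a c * x j c := by
  classical
  set φ : l2 p →L[ℂ] ℂ := (innerSL ℂ (lp.single 2 n (eVec m a))).comp TG with hφ
  have hφ_apply : ∀ y : l2 p, φ y = (TG y) n a := fun y => inner_single_coord n a (TG y)
  have hx : HasSum (fun j : ℕ => (lp.single 2 j (x j) : l2 p)) x :=
    lp.hasSum_single ENNReal.ofNat_ne_top x
  have h1 : HasSum (fun j : ℕ => φ (lp.single 2 j (x j))) (φ x) := φ.hasSum hx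
  have hterm : ∀ j : ℕ, φ (lp.single 2 j (x j))
      = ∑ c, x j c * (if j ≤ n then G (n - j) a c else 0) := by
    intro j
    have hdec : (x j : ES p) = ∑ c, x j c • eVec p c := by
      have := (EuclideanSpace.basisFun (Fin p) ℂ).sum_repr (x j)
      simpa using this.symm
    have hsingle : (lp.single 2 j (x j) : l2 p)
        = ∑ c, x j c • (lp.single 2 j (eVec p c) : l2 p) := by
      have h2 : (lp.single 2 j (x j) : l2 p) = singleLM p j (∑ c, x j c • eVec p c) := by
        rw [← hdec, singleLM_apply]
      rw [h2, map_sum]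
      refine Finset.sum_congr rfl fun c _ => ?_
      rw [map_smul, singleLM_apply]
    rw [hsingle, map_sum]
    refine Finset.sum_congr rfl fun c _ => ?_
    rw [map_smul, smul_eq_mul, hφ_apply, hTG j c n a]
  have hsupp : ∀ j ∉ Finset.range (n + 1), φ (lp.single 2 j (x j)) = 0 := by
    intro j hj
    have hjn : ¬ j ≤ n := by
      simpa [Nat.lt_succ_iff] using hj
    rw [hterm j]
    simp [hjn]
  have h2 : HasSum (fun j : ℕ => φ (lp.single 2 j (x j)))
      (∑ j ∈ Finset.range (n + 1), φ (lp.single 2 j (x j))) :=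
    hasSum_sum_of_ne_finset_zero hsupp
  have h3 := h1.unique h2
  rw [hφ_apply] at h3
  rw [h3]
  refine Finset.sum_congr rfl fun j hj => ?_
  have hjn : j ≤ n := Nat.lt_succ_iff.mp (Finset.mem_range.mp hj)
  rw [hterm j]
  refine Finset.sum_congr rfl fun c _ => ?_
  rw [if_pos hjn, mul_comm]

/-- For `G ∈ H^∞_{m×p}` with `T_G T_G*` strictly positive and `Y` the
associated function, `G(z) Y(z) = G₀` for every `z ∈ 𝔻`, where `G₀ = G(0)`. -/
theorem bezout_corona_stmt3
    (m p : ℕ) (hm : 0 < m) (hmp : m ≤ p)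
    (G : ℕ → Matrix (Fin m) (Fin p) ℂ)
    (TG : l2 p →L[ℂ] l2 m)
    (hTG : ∀ (j : ℕ) (b : Fin p) (i : ℕ) (a : Fin m),
      (TG (lp.single 2 j (eVec p b))) i a = if j ≤ i then G (i - j) a b else 0)
    (HG : l2 p →L[ℂ] l2 m)
    (hHG : ∀ (j : ℕ) (b : Fin p) (i : ℕ) (a : Fin m),
      (HG (lp.single 2 j (eVec p b))) i a = G (i + j + 1) a b)
    (Tinv : l2 m →L[ℂ] l2 m)
    (hT1 : ∀ x, Tinv (TG (TG.adjoint x)) = x)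
    (hT2 : ∀ x, TG (TG.adjoint (Tinv x)) = x)
    (Y : ℂ → Matrix (Fin p) (Fin p) ℂ)
    (hY : ∀ z ∈ Metric.ball (0 : ℂ) 1, ∀ (a b : Fin p),
      Y z a b = (if a = b then 1 else 0)
        - z * ∑' i : ℕ, z ^ i *
            (TG.adjoint (Tinv (HG (lp.single 2 0 (eVec p b))))) i a) :
    ∀ z ∈ Metric.ball (0 : ℂ) 1, seriesM G z * Y z = G 0 := by
  intro z hz
  have hz1 : ‖z‖ < 1 := by simpa using mem_ball_zero_iff.mp hz
  have hgeo : Summable (fun ν : ℕ => ‖z‖ ^ ν) :=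
    summable_geometric_of_lt_one (norm_nonneg z) hz1
  -- uniform bound on entries of G
  have hGbd : ∀ (ν : ℕ) (a' : Fin m) (c : Fin p), ‖G ν a' c‖ ≤ ‖TG‖ := by
    intro ν a' c
    have h1 : (TG (lp.single 2 0 (eVec p c))) ν a' = G ν a' c := by
      simpa using hTG 0 c ν a'
    rw [← h1]
    refine (coord_le_norm _ _ _).trans ?_
    calc ‖TG (lp.single 2 0 (eVec p c))‖
        ≤ ‖TG‖ * ‖(lp.single 2 0 (eVec p c) : l2 p)‖ := TG.le_opNorm _
      _ = ‖TG‖ := by rw [norm_lp_single_eVec, mul_one]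
  have Sf : ∀ (a' : Fin m) (c : Fin p), Summable fun ν : ℕ => ‖z ^ ν * G ν a' c‖ := by
    intro a' c
    refine Summable.of_nonneg_of_le (fun _ => norm_nonneg _) (fun ν => ?_)
      (hgeo.mul_right ‖TG‖)
    rw [norm_mul, norm_pow]
    exact mul_le_mul_of_nonneg_left (hGbd ν a' c) (by positivity)
  ext a b
  set u : l2 p := TG.adjoint (Tinv (HG (lp.single 2 0 (eVec p b)))) with hu
  have Sg : ∀ c : Fin p, Summable fun i : ℕ => ‖z ^ i * u i c‖ := by
    intro c
    refine Summable.of_nonneg_of_le (fun _ => norm_nonneg _) (fun i => ?_)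
      (hgeo.mul_right ‖u‖)
    rw [norm_mul, norm_pow]
    exact mul_le_mul_of_nonneg_left (coord_le_norm u i c) (by positivity)
  have hua : ∀ (n : ℕ) (a' : Fin m), (TG u) n a' = G (n + 1) a' b := by
    intro n a'
    rw [hu, hT2]
    simpa using hHG 0 b n a'
  -- the Cauchy product
  have hC : ∀ c : Fin p,
      (∑' ν : ℕ, z ^ ν * G ν a c) * (∑' i : ℕ, z ^ i * u i c)
        = ∑' n : ℕ, ∑ k ∈ Finset.range (n + 1),
            (z ^ k * G k a c) * (z ^ (n - k) * u (n - k) c) :=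
    fun c => tsum_mul_tsum_eq_tsum_sum_range_of_summable_norm (Sf a c) (Sg c)
  have hsum_each : ∀ c : Fin p, Summable fun n : ℕ => ∑ k ∈ Finset.range (n + 1),
      (z ^ k * G k a c) * (z ^ (n - k) * u (n - k) c) :=
    fun c => (summable_norm_sum_mul_range_of_summable_norm (Sf a c) (Sg c)).of_norm
  have hinner : ∀ n : ℕ,
      (∑ c, ∑ k ∈ Finset.range (n + 1), (z ^ k * G k a c) * (z ^ (n - k) * u (n - k) c))
        = z ^ n * G (n + 1) a b := by
    intro n
    have step1 : (∑ c, ∑ k ∈ Finset.range (n + 1),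
        (z ^ k * G k a c) * (z ^ (n - k) * u (n - k) c))
        = ∑ k ∈ Finset.range (n + 1), ∑ c, z ^ n * (G k a c * u (n - k) c) := by
      rw [Finset.sum_comm]
      refine Finset.sum_congr rfl fun k hk => Finset.sum_congr rfl fun c _ => ?_
      have hk' : k ≤ n := Nat.lt_succ_iff.mp (Finset.mem_range.mp hk)
      calc (z ^ k * G k a c) * (z ^ (n - k) * u (n - k) c)
          = z ^ (k + (n - k)) * (G k a c * u (n - k) c) := by rw [pow_add]; ring
        _ = z ^ n * (G k a c * u (n - k) c) := by rw [Nat.add_sub_cancel' hk']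
    have step2 : (∑ k ∈ Finset.range (n + 1), ∑ c, z ^ n * (G k a c * u (n - k) c))
        = ∑ j ∈ Finset.range (n + 1), ∑ c, z ^ n * (G (n - j) a c * u j c) := by
      rw [← Finset.sum_range_reflect (fun j => ∑ c, z ^ n * (G (n - j) a c * u j c)) (n + 1)]
      refine Finset.sum_congr rfl fun k hk => ?_
      have hk' : k ≤ n := Nat.lt_succ_iff.mp (Finset.mem_range.mp hk)
      refine Finset.sum_congr rfl fun c _ => ?_
      rw [Nat.succ_sub_one, Nat.sub_sub_self hk']
    rw [step1, step2, ← hua n a, toeplitz_apply m p G TG hTG u n a, Finset.mul_sum]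
    exact Finset.sum_congr rfl fun j _ => by rw [Finset.mul_sum]
  have hmain : (∑ c, (∑' ν : ℕ, z ^ ν * G ν a c) * (∑' i : ℕ, z ^ i * u i c))
      = ∑' n : ℕ, z ^ n * G (n + 1) a b := by
    calc (∑ c, (∑' ν : ℕ, z ^ ν * G ν a c) * (∑' i : ℕ, z ^ i * u i c))
        = ∑ c, ∑' n : ℕ, ∑ k ∈ Finset.range (n + 1),
            (z ^ k * G k a c) * (z ^ (n - k) * u (n - k) c) :=
          Finset.sum_congr rfl fun c _ => hC c
      _ = ∑' n : ℕ, ∑ c, ∑ k ∈ Finset.range (n + 1),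
            (z ^ k * G k a c) * (z ^ (n - k) * u (n - k) c) :=
          (Summable.tsum_finsetSum fun c _ => hsum_each c).symm
      _ = ∑' n : ℕ, z ^ n * G (n + 1) a b := tsum_congr fun n => hinner n
  have hfs : Summable fun ν : ℕ => z ^ ν * G ν a b := (Sf a b).of_norm
  have hshift : (∑' ν : ℕ, z ^ ν * G ν a b)
      = G 0 a b + z * ∑' n : ℕ, z ^ n * G (n + 1) a b := by
    rw [Summable.tsum_eq_zero_add hfs]
    rw [pow_zero, one_mul, ← tsum_mul_left]
    congr 1
    refine tsum_congr fun n => ?_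
    rw [pow_succ]
    ring
  -- assemble
  rw [Matrix.mul_apply]
  have hYv := hY z hz
  have hseries : ∀ c : Fin p, seriesM G z a c = ∑' ν : ℕ, z ^ ν * G ν a c := fun c => rfl
  calc (∑ c, seriesM G z a c * Y z c b)
      = ∑ c, ((∑' ν : ℕ, z ^ ν * G ν a c) * (if c = b then 1 else 0)
          - z * ((∑' ν : ℕ, z ^ ν * G ν a c) * (∑' i : ℕ, z ^ i * u i c))) := by
        refine Finset.sum_congr rfl fun c _ => ?_
        rw [hseries c, hYv c b]
        ring
    _ = (∑ c, (∑' ν : ℕ, z ^ ν * G ν a c) * (if c = b then 1 else 0))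
        - z * (∑ c, (∑' ν : ℕ, z ^ ν * G ν a c) * (∑' i : ℕ, z ^ i * u i c)) := by
        rw [Finset.sum_sub_distrib, ← Finset.mul_sum]
    _ = (∑' ν : ℕ, z ^ ν * G ν a b)
        - z * ∑' n : ℕ, z ^ n * G (n + 1) a b := by
        rw [hmain]
        congr 1
        simp
    _ = G 0 a b := by rw [hshift]; ring
end
end

section
/- Let G ∈ H^∞_{m×p} with T_G T_G* strictly positive. Then the function Ξ(z) = Y(z)Ξ₀ satisfies Ξ(z) = E_p*(I − z S_p*)⁻¹ T_G*(T_G T_G*)⁻¹ E_m for every z ∈ 𝔻. -/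
/-!
Setting: `l2 n` models ℓ²₊(ℂⁿ); `lp.single 2 0` is the canonical embedding `E_n`, and
evaluating a sequence at coordinate `k` realizes `E_n* (S_n*)^k`.  Block Toeplitz and
Hankel operators, as well as the (bounded) inverse of `T_G T_G*`, are specified through
their actions on the standard basis vectors of the coordinate spaces.
-/

noncomputable section
open scoped Matrix

namespace BezoutAux

open scoped ENNReal

local notation "⟪" x ", " y "⟫" => @inner ℂ _ _ x y

lemma coord {n : ℕ} (v : l2 n) (i : ℕ) (c : Fin n) :
    v i c = ⟪(lp.single 2 i (eVec n c) : l2 n), v⟫ := by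
  rw [lp.inner_single_left, EuclideanSpace.inner_single_left]
  simp

lemma adj_coord {m p : ℕ} (TG : l2 p →L[ℂ] l2 m) (y : l2 m) (i : ℕ) (c : Fin p) :
    (TG.adjoint y) i c = ⟪TG (lp.single 2 i (eVec p c)), y⟫ := by
  rw [coord (TG.adjoint y) i c, ContinuousLinearMap.adjoint_inner_right]

lemma TG_apply {m p : ℕ} (G : ℕ → Matrix (Fin m) (Fin p) ℂ)
    (TG : l2 p →L[ℂ] l2 m)
    (hTG : ∀ (j : ℕ) (b : Fin p) (i : ℕ) (a : Fin m),
      (TG (lp.single 2 j (eVec p b))) i a = if j ≤ i then G (i - j) a b else 0)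
    (v : l2 p) (i : ℕ) (a : Fin m) :
    (TG v) i a = ∑ j ∈ Finset.range (i + 1), ∑ c, G (i - j) a c * v j c := by
  have h0 : (TG v) i a = ⟪TG.adjoint (lp.single 2 i (eVec m a)), v⟫ := by
    rw [ContinuousLinearMap.adjoint_inner_left, ← coord]
  have hc : ∀ (j : ℕ) (c : Fin p), (TG.adjoint (lp.single 2 i (eVec m a))) j c
      = if j ≤ i then (starRingEnd ℂ) (G (i - j) a c) else 0 := by
    intro j c
    rw [adj_coord, lp.inner_single_right, EuclideanSpace.inner_single_right, hTG]
    simp [apply_ite (starRingEnd ℂ)]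
  have hterm : ∀ j : ℕ, ⟪(TG.adjoint (lp.single 2 i (eVec m a))) j, v j⟫
      = if j ≤ i then ∑ c, G (i - j) a c * v j c else 0 := by
    intro j
    rw [PiLp.inner_apply]
    by_cases hj : j ≤ i
    · rw [if_pos hj]
      refine Finset.sum_congr rfl fun c _ => ?_
      rw [RCLike.inner_apply, hc j c, if_pos hj]
      simp
      ring
    · rw [if_neg hj]
      refine Finset.sum_eq_zero fun c _ => ?_
      rw [RCLike.inner_apply, hc j c, if_neg hj]
      simp
  rw [h0, lp.inner_eq_tsum, tsum_congr hterm,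
    tsum_eq_sum (s := Finset.range (i + 1))
      (fun j hj => if_neg (by simp at hj; omega))]
  exact Finset.sum_congr rfl fun j hj => if_pos (by simp at hj; omega)

def bshift {n : ℕ} (u : l2 n) : l2 n :=
  ⟨fun k => u (k + 1), by
    have h : Summable fun k : ℕ => ‖u k‖ ^ (2 : ℝ≥0∞).toReal :=
      (memℓp_gen_iff (by norm_num)).mp (lp.memℓp u)
    exact memℓp_gen (h.comp_injective fun a b hab => by omega)⟩

@[simp] lemma bshift_apply {n : ℕ} (u : l2 n) (k : ℕ) : (bshift u) k = u (k + 1) := rfl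

lemma adj_shift {m p : ℕ} (G : ℕ → Matrix (Fin m) (Fin p) ℂ)
    (TG : l2 p →L[ℂ] l2 m)
    (hTG : ∀ (j : ℕ) (b : Fin p) (i : ℕ) (a : Fin m),
      (TG (lp.single 2 j (eVec p b))) i a = if j ≤ i then G (i - j) a b else 0)
    (y : l2 m) (j : ℕ) (c : Fin p) :
    (TG.adjoint y) (j + 1) c = (TG.adjoint (bshift y)) j c := by
  rw [adj_coord, adj_coord, lp.inner_eq_tsum, lp.inner_eq_tsum,
    Summable.tsum_eq_zero_add (lp.summable_inner (𝕜 := ℂ) (TG (lp.single 2 (j + 1) (eVec p c))) y)]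
  have h0 : ⟪(TG (lp.single 2 (j + 1) (eVec p c))) 0, y 0⟫ = 0 := by
    rw [PiLp.inner_apply]
    refine Finset.sum_eq_zero fun a _ => ?_
    rw [RCLike.inner_apply, hTG]
    simp
  rw [h0, zero_add]
  refine tsum_congr fun k => ?_
  rw [PiLp.inner_apply, PiLp.inner_apply]
  refine Finset.sum_congr rfl fun a _ => ?_
  rw [RCLike.inner_apply, RCLike.inner_apply, hTG, hTG, bshift_apply]
  simp [Nat.succ_sub_succ, Nat.succ_le_succ_iff]

lemma coord_bound {n : ℕ} (y : l2 n) (i : ℕ) (c : Fin n) : ‖y i c‖ ≤ ‖y‖ := by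
  have h1 : ‖y i c‖ ≤ ‖y i‖ := by
    calc ‖y i c‖ = ‖⟪(eVec n c : ES n), y i⟫‖ := by
          rw [EuclideanSpace.inner_single_left]; simp
    _ ≤ ‖(eVec n c : ES n)‖ * ‖y i‖ := norm_inner_le_norm _ _
    _ = ‖y i‖ := by simp
  exact h1.trans (lp.norm_apply_le_norm (by norm_num) y i)

lemma summ {n : ℕ} (y : l2 n) (c : Fin n) {z : ℂ} (hz : ‖z‖ < 1) :
    Summable fun i : ℕ => z ^ i * y i c := by
  refine Summable.of_norm_bounded (g := fun i => ‖y‖ * ‖z‖ ^ i)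
    ((summable_geometric_of_lt_one (norm_nonneg z) hz).mul_left ‖y‖) fun i => ?_
  rw [norm_mul, norm_pow, mul_comm]
  exact mul_le_mul_of_nonneg_right (coord_bound y i c) (by positivity)

lemma sum_coord {n : ℕ} {ι : Type*} (s : Finset ι) (y : ι → l2 n) (i : ℕ) (a : Fin n) :
    (∑ c ∈ s, y c : l2 n) i a = ∑ c ∈ s, y c i a := by
  induction s using Finset.cons_induction with
  | empty => simp
  | cons c s hc ih =>
    rw [Finset.sum_cons, Finset.sum_cons, ← ih]
    have h : ((y c + ∑ x ∈ s, y x : l2 n) : ∀ k, ES n) i = y c i + (∑ x ∈ s, y x : l2 n) i := by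
      rw [lp.coeFn_add]; rfl
    rw [h]
    rfl

lemma single_decomp {n : ℕ} (w : ES n) :
    (lp.single 2 0 w : l2 n) = ∑ c, w c • (lp.single 2 0 (eVec n c) : l2 n) := by
  apply lp.ext
  funext k
  refine PiLp.ext fun d => ?_
  have hr : (∑ c, w c • (lp.single 2 0 (eVec n c) : l2 n) : l2 n) k d
      = ∑ c, (w c • (lp.single 2 0 (eVec n c) : l2 n) : l2 n) k d := sum_coord _ _ k d
  rw [hr]
  have hs : ∀ c : Fin n, (w c • (lp.single 2 0 (eVec n c) : l2 n) : l2 n) k d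
      = w c * (lp.single 2 0 (eVec n c) : l2 n) k d := by
    intro c; rw [lp.coeFn_smul]; rfl
  simp_rw [hs]
  rcases k with _ | k
  · rw [lp.single_apply_self]
    simp_rw [lp.single_apply_self]
    simp [EuclideanSpace.single_apply]
  · rw [lp.single_apply_ne _ _ _ (Nat.succ_ne_zero k)]
    simp_rw [lp.single_apply_ne _ _ _ (Nat.succ_ne_zero k)]
    simp

end BezoutAux

set_option maxHeartbeats 2000000

/-- The function `Ξ(z) = Y(z)Ξ₀` is also given by
`Ξ(z) = E_p*(I − z S_p*)⁻¹ T_G*(T_G T_G*)⁻¹ E_m` for every `z ∈ 𝔻`. -/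
theorem bezout_corona_stmt5
    (m p : ℕ) (hm : 0 < m) (hmp : m ≤ p)
    (G : ℕ → Matrix (Fin m) (Fin p) ℂ)
    (TG : l2 p →L[ℂ] l2 m)
    (hTG : ∀ (j : ℕ) (b : Fin p) (i : ℕ) (a : Fin m),
      (TG (lp.single 2 j (eVec p b))) i a = if j ≤ i then G (i - j) a b else 0)
    (HG : l2 p →L[ℂ] l2 m)
    (hHG : ∀ (j : ℕ) (b : Fin p) (i : ℕ) (a : Fin m),
      (HG (lp.single 2 j (eVec p b))) i a = G (i + j + 1) a b)
    (Tinv : l2 m →L[ℂ] l2 m)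
    (hT1 : ∀ x, Tinv (TG (TG.adjoint x)) = x)
    (hT2 : ∀ x, TG (TG.adjoint (Tinv x)) = x)
    (Ξ₀ : Matrix (Fin p) (Fin m) ℂ)
    (hΞ₀ : ∀ (a : Fin p) (b : Fin m),
      Ξ₀ a b = (TG.adjoint (Tinv (lp.single 2 0 (eVec m b)))) 0 a)
    (Y : ℂ → Matrix (Fin p) (Fin p) ℂ)
    (hY : ∀ z ∈ Metric.ball (0 : ℂ) 1, ∀ (a b : Fin p),
      Y z a b = (if a = b then 1 else 0)
        - z * ∑' i : ℕ, z ^ i *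
            (TG.adjoint (Tinv (HG (lp.single 2 0 (eVec p b))))) i a) :
    ∀ z ∈ Metric.ball (0 : ℂ) 1, ∀ (a : Fin p) (b : Fin m),
      (Y z * Ξ₀) a b
        = ∑' i : ℕ, z ^ i * (TG.adjoint (Tinv (lp.single 2 0 (eVec m b)))) i a := by
  intro z hzm a b
  have hz : ‖z‖ < 1 := by
    simpa [dist_zero_right] using Metric.mem_ball.mp hzm
  set u : l2 m := Tinv ((lp.single 2 0 (eVec m b) : l2 m)) with hu
  set x : l2 p := TG.adjoint u with hx
  set w : Fin p → l2 p := fun c => TG.adjoint (Tinv (HG ((lp.single 2 0 (eVec p c) : l2 p)))) with hw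
  -- coordinates of x at 0
  have hx0 : ∀ c, x 0 c = Ξ₀ c b := fun c => (hΞ₀ c b).symm
  -- TG x = single
  have hTGx : TG x = (lp.single 2 0 (eVec m b) : l2 m) := hT2 _
  have hTx1 : ∀ (i : ℕ) (a' : Fin m), (TG x) (i + 1) a' = 0 := by
    intro i a'
    rw [hTGx]
    rw [lp.single_apply_ne _ _ _ (Nat.succ_ne_zero i)]
    rfl
  -- key Toeplitz relation
  have hkeyT : ∀ (i : ℕ) (a' : Fin m),
      (∑ j ∈ Finset.range (i + 1), ∑ c, G (i - j) a' c * x (j + 1) c)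
        + ∑ c, G (i + 1) a' c * x 0 c = 0 := by
    intro i a'
    have h := BezoutAux.TG_apply G TG hTG x (i + 1) a'
    rw [hTx1 i a', Finset.sum_range_succ'] at h
    simpa [Nat.succ_sub_succ] using h.symm
  set bu : l2 m := BezoutAux.bshift u with hbu
  have hbux : ∀ (j : ℕ) (c : Fin p), (TG.adjoint bu) j c = x (j + 1) c :=
    fun j c => (BezoutAux.adj_shift G TG hTG u j c).symm
  -- q and its decomposition
  set q : l2 p := (lp.single 2 0 (x 0) : l2 p) with hq
  have hqd : q = ∑ c, x 0 c • ((lp.single 2 0 (eVec p c) : l2 p) : l2 p) :=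
    BezoutAux.single_decomp _
  have hsmul_coord : ∀ (n' : ℕ) (α : ℂ) (y : l2 n') (i : ℕ) (a' : Fin n'),
      (α • y : l2 n') i a' = α * y i a' := by
    intro n' α y i a'
    rw [lp.coeFn_smul]; rfl
  have hHGq : ∀ (i : ℕ) (a' : Fin m), (HG q) i a' = ∑ c, G (i + 1) a' c * x 0 c := by
    intro i a'
    rw [hqd, map_sum, BezoutAux.sum_coord]
    refine Finset.sum_congr rfl fun c _ => ?_
    rw [map_smul, hsmul_coord, hHG]
    ring
  -- key2 : TG (T† bu) = - HG q
  have hkey2 : TG (TG.adjoint bu) = - HG q := by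
    apply lp.ext
    funext i
    refine PiLp.ext fun a' => ?_
    rw [BezoutAux.TG_apply G TG hTG]
    have hneg : ((- HG q : l2 m) : ∀ k, ES m) i a' = -((HG q) i a') := by
      rw [lp.coeFn_neg]; rfl
    rw [hneg, hHGq]
    have hL : ∑ j ∈ Finset.range (i + 1), ∑ c, G (i - j) a' c * (TG.adjoint bu) j c
        = ∑ j ∈ Finset.range (i + 1), ∑ c, G (i - j) a' c * x (j + 1) c :=
      Finset.sum_congr rfl fun j _ => Finset.sum_congr rfl fun c _ => by rw [hbux]
    rw [hL]
    have h := hkeyT i a'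
    linear_combination h
  -- key3 : bu = - Tinv (HG q)
  have hkey3 : bu = - Tinv (HG q) := by
    have h1 := hT1 bu
    rw [hkey2, map_neg] at h1
    exact h1.symm
  -- coordinates of T† (Tinv (HG q))
  have hwq : ∀ (i : ℕ) (a' : Fin p), (TG.adjoint (Tinv (HG q))) i a'
      = ∑ c, Ξ₀ c b * (w c) i a' := by
    intro i a'
    have hlin : TG.adjoint (Tinv (HG q)) = ∑ c, x 0 c • w c := by
      rw [hqd, map_sum, map_sum, map_sum]
      exact Finset.sum_congr rfl fun c _ => by rw [map_smul, map_smul, map_smul]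
    rw [hlin, BezoutAux.sum_coord]
    refine Finset.sum_congr rfl fun c _ => ?_
    rw [hsmul_coord, hx0]
  -- key4
  have hkey4 : ∀ (i : ℕ) (a' : Fin p),
      x (i + 1) a' = -∑ c, Ξ₀ c b * (w c) i a' := by
    intro i a'
    rw [← hbux i a', hkey3, map_neg]
    have hneg : ((- (TG.adjoint (Tinv (HG q))) : l2 p) : ∀ k, ES p) i a'
        = -((TG.adjoint (Tinv (HG q))) i a') := by
      rw [lp.coeFn_neg]; rfl
    rw [hneg, hwq]
  -- summability
  have hsum_x : Summable fun i : ℕ => z ^ i * x i a := BezoutAux.summ x a hz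
  have hsum_w : ∀ c : Fin p, Summable fun i : ℕ => z ^ i * (w c) i a :=
    fun c => BezoutAux.summ (w c) a hz
  -- final computation
  rw [Matrix.mul_apply]
  have hYc : ∀ c : Fin p, Y z a c * Ξ₀ c b
      = (if a = c then 1 else 0) * Ξ₀ c b
        - z * ∑' i : ℕ, z ^ i * (w c) i a * Ξ₀ c b := by
    intro c
    rw [hY z hzm a c, sub_mul]
    congr 1
    rw [mul_assoc, ← tsum_mul_right]
  have hswap : ∀ i : ℕ, ∑ c, z ^ i * (w c) i a * Ξ₀ c b = -(z ^ i * x (i + 1) a) := by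
    intro i
    have hS : ∑ c, Ξ₀ c b * (w c) i a = -(x (i + 1) a) := by
      have h := hkey4 i a
      linear_combination h
    have h2 : ∑ c, z ^ i * (w c) i a * Ξ₀ c b = z ^ i * ∑ c, Ξ₀ c b * (w c) i a := by
      rw [Finset.mul_sum]
      exact Finset.sum_congr rfl fun c _ => by ring
    rw [h2, hS]
    ring
  calc ∑ c, Y z a c * Ξ₀ c b
      = ∑ c, ((if a = c then 1 else 0) * Ξ₀ c b)
        - z * ∑ c, ∑' i : ℕ, z ^ i * (w c) i a * Ξ₀ c b := by
        rw [Finset.sum_congr rfl fun c _ => hYc c, Finset.sum_sub_distrib,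
          ← Finset.mul_sum]
    _ = x 0 a - z * ∑' i : ℕ, ∑ c, z ^ i * (w c) i a * Ξ₀ c b := by
        rw [← Summable.tsum_finsetSum (fun c _ => (hsum_w c).mul_right (Ξ₀ c b))]
        have h1 : ∑ c, ((if a = c then 1 else 0) * Ξ₀ c b) = x 0 a := by
          simp [ite_mul, hx0 a]
        rw [h1]
    _ = x 0 a + z * ∑' i : ℕ, z ^ i * x (i + 1) a := by
        rw [tsum_congr hswap, tsum_neg]
        ring
    _ = ∑' i : ℕ, z ^ i * x i a := by
        rw [Summable.tsum_eq_zero_add hsum_x]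
        simp only [pow_zero, one_mul, pow_succ]
        rw [← tsum_mul_left]
        congr 1
        refine tsum_congr fun i => ?_
        ring
end
end

section
/- Let G ∈ H^∞_{m×p} with T_G T_G* strictly positive, and let Y_0, Y_1, Y_2, … be the Taylor coefficients at zero of the function Y. Then for every j ≥ 0 the series ∑_{i=0}^∞ Y_i* Y_{i+j} converges, and it equals I_p + E_p* H_G* (T_G T_G*)⁻¹ H_G E_p when j = 0, and equals −G₀* E_m* (S_m*)^{j−1} (T_G T_G*)⁻¹ H_G E_p when j ≥ 1, where G₀ = G(0). -/
/-!
Setting: `l2 n` models ℓ²₊(ℂⁿ); `lp.single 2 0` is the canonical embedding `E_n`, and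
evaluating a sequence at coordinate `k` realizes `E_n* (S_n*)^k`.  Block Toeplitz and
Hankel operators, as well as the (bounded) inverse of `T_G T_G*`, are specified through
their actions on the standard basis vectors of the coordinate spaces.
-/

noncomputable section
open scoped Matrix

open scoped ENNReal

namespace Stmt7Aux

lemma shift_memℓp {n : ℕ} (j : ℕ) (x : l2 n) :
    Memℓp (fun k => if j ≤ k then (x (k - j) : ES n) else 0) 2 := by
  apply memℓp_gen
  have hx : Summable fun i : ℕ => ‖x i‖ ^ (2 : ℝ≥0∞).toReal :=
    (lp.memℓp x).summable (by norm_num)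
  have hinj : Function.Injective (fun i : ℕ => i + j) := add_left_injective j
  rw [← Function.Injective.summable_iff hinj]
  · refine hx.congr fun i => ?_
    simp [Function.comp, Nat.le_add_left, Nat.add_sub_cancel]
  · intro k hk
    have hk' : ¬ j ≤ k := by
      intro h; exact hk ⟨k - j, by change k - j + j = k; omega⟩
    simp [hk']

/-- forward shift by `j` on `l2 n`. -/
def shiftL2 {n : ℕ} (j : ℕ) : l2 n →L[ℂ] l2 n :=
  LinearMap.mkContinuous
    { toFun := fun x => (⟨fun k => if j ≤ k then (x (k - j) : ES n) else 0,
        shift_memℓp j x⟩ : l2 n)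
      map_add' := fun x y => by
        apply lp.ext; funext k
        simp only [lp.coeFn_add, Pi.add_apply]
        by_cases h : j ≤ k <;> simp [h]
      map_smul' := fun c x => by
        apply lp.ext; funext k
        simp only [lp.coeFn_smul, Pi.smul_apply, RingHom.id_apply]
        by_cases h : j ≤ k <;> simp [h] }
    1
    (by
      intro x
      rw [one_mul]
      have h2 : 0 < (2 : ℝ≥0∞).toReal := by norm_num
      apply le_of_eq
      rw [lp.norm_eq_tsum_rpow h2, lp.norm_eq_tsum_rpow h2]
      congr 1
      have hinj : Function.Injective (fun i : ℕ => i + j) := add_left_injective j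
      rw [← Function.Injective.tsum_eq hinj]
      · exact tsum_congr fun i => by
          simp [Nat.le_add_left, Nat.add_sub_cancel]
      · intro k hk
        have h : j ≤ k := by
          by_contra h
          apply hk
          show ‖(if j ≤ k then (x (k - j) : ES n) else 0)‖ ^ (2 : ℝ≥0∞).toReal = 0
          simp [h, Real.zero_rpow h2.ne']
        exact ⟨k - j, by change k - j + j = k; omega⟩)

lemma shiftL2_apply {n : ℕ} (j : ℕ) (x : l2 n) (k : ℕ) :
    shiftL2 j x k = if j ≤ k then (x (k - j) : ES n) else 0 := rfl

lemma shiftL2_single {n : ℕ} (j k : ℕ) (v : ES n) :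
    shiftL2 j (lp.single 2 k v) = lp.single 2 (k + j) v := by
  apply lp.ext; funext i
  rw [shiftL2_apply]
  by_cases h : j ≤ i
  · rw [if_pos h]
    by_cases h2 : i = k + j
    · have : i - j = k := by omega
      rw [this, lp.single_apply_self, h2, lp.single_apply_self]
    · rw [lp.single_apply_ne _ _ _ (show i - j ≠ k by omega),
        lp.single_apply_ne _ _ _ h2]
  · rw [if_neg h, lp.single_apply_ne _ _ _ (show i ≠ k + j by omega)]

lemma lp_single_add {n : ℕ} (k : ℕ) (v w : ES n) :
    lp.single 2 k (v + w) = (lp.single 2 k v : l2 n) + lp.single 2 k w := by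
  apply lp.ext; funext i
  by_cases h : i = k
  · subst h
    simp [lp.single_apply_self, lp.coeFn_add]
  · simp [lp.single_apply_ne _ _ _ h, lp.coeFn_add]

lemma lp_single_zero {n : ℕ} (k : ℕ) :
    (lp.single 2 k (0 : ES n) : l2 n) = 0 := by
  apply lp.ext; funext i
  by_cases h : i = k
  · subst h; simp [lp.single_apply_self]
  · simp [lp.single_apply_ne _ _ _ h]

lemma lp_single_sum {n : ℕ} (k : ℕ) (g : Fin n → ES n) :
    (lp.single 2 k (∑ b, g b) : l2 n) = ∑ b, lp.single 2 k (g b) :=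
  map_sum (AddMonoidHom.mk' (fun v => (lp.single 2 k v : l2 n)) (lp_single_add k)) g _

lemma esum (n : ℕ) (v : ES n) : ∑ b : Fin n, v b • eVec n b = v := by
  simpa [EuclideanSpace.basisFun_apply, EuclideanSpace.basisFun_repr] using
    (EuclideanSpace.basisFun (Fin n) ℂ).sum_repr v

lemma coord_eq_inner {n : ℕ} (x : l2 n) (k : ℕ) (a : Fin n) :
    (inner ℂ (lp.single 2 k (eVec n a) : l2 n) x : ℂ) = x k a := by
  rw [lp.inner_single_left]
  simp [eVec, EuclideanSpace.inner_single_left]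



lemma lp_coeFn_sum {n : ℕ} {ι : Type*} (s : Finset ι) (g : ι → l2 n) (i : ℕ) :
    (∑ b ∈ s, g b : l2 n) i = ∑ b ∈ s, (g b) i := by
  induction s using Finset.cons_induction with
  | empty => simp
  | cons b s hb ih => simp [Finset.sum_cons, lp.coeFn_add, Pi.add_apply, ih]; exact Finset.sum_apply i s _

lemma lp_single_decomp {n : ℕ} (k : ℕ) (v : ES n) :
    (lp.single 2 k v : l2 n) = ∑ b, v b • (lp.single 2 k (eVec n b) : l2 n) := by
  apply lp.ext; funext i
  rw [lp_coeFn_sum]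
  by_cases h : i = k
  · subst h
    rw [lp.single_apply_self]
    have : ∀ b : Fin n, (v b • (lp.single 2 i (eVec n b) : l2 n)) i = v b • eVec n b := by
      intro b
      rw [lp.coeFn_smul, Pi.smul_apply, lp.single_apply_self]
    rw [Finset.sum_congr rfl fun b _ => this b, esum]
  · rw [lp.single_apply_ne _ _ _ h]
    symm
    apply Finset.sum_eq_zero
    intro b _
    rw [lp.coeFn_smul, Pi.smul_apply, lp.single_apply_ne _ _ _ h, smul_zero]

lemma hmat {p : ℕ} {F : ℕ → Matrix (Fin p) (Fin p) ℂ} {S : Matrix (Fin p) (Fin p) ℂ}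
    (h : ∀ a b, HasSum (fun i => F i a b) (S a b)) : HasSum F S :=
  Pi.hasSum.2 fun a => Pi.hasSum.2 fun b => h a b

end Stmt7Aux

set_option maxHeartbeats 1000000 in
open Stmt7Aux in
/-- For the Taylor coefficients `Y_ν` of `Y` (so `Y₀ = I_p` and
`Y_{ν+1} = −E_p*(S_p*)^ν T_G*(T_G T_G*)⁻¹ H_G E_p`), the series `∑_{i} Y_i* Y_{i+j}`
converges for every `j ≥ 0`; it equals `I_p + E_p* H_G* (T_G T_G*)⁻¹ H_G E_p` when
`j = 0` and `−G₀* E_m* (S_m*)^{j−1} (T_G T_G*)⁻¹ H_G E_p` when `j ≥ 1`. -/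
theorem bezout_corona_stmt7
    (m p : ℕ) (hm : 0 < m) (hmp : m ≤ p)
    (G : ℕ → Matrix (Fin m) (Fin p) ℂ)
    (TG : l2 p →L[ℂ] l2 m)
    (hTG : ∀ (j : ℕ) (b : Fin p) (i : ℕ) (a : Fin m),
      (TG (lp.single 2 j (eVec p b))) i a = if j ≤ i then G (i - j) a b else 0)
    (HG : l2 p →L[ℂ] l2 m)
    (hHG : ∀ (j : ℕ) (b : Fin p) (i : ℕ) (a : Fin m),
      (HG (lp.single 2 j (eVec p b))) i a = G (i + j + 1) a b)
    (Tinv : l2 m →L[ℂ] l2 m)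
    (hT1 : ∀ x, Tinv (TG (TG.adjoint x)) = x)
    (hT2 : ∀ x, TG (TG.adjoint (Tinv x)) = x)
    (Yc : ℕ → Matrix (Fin p) (Fin p) ℂ)
    (hYc0 : Yc 0 = 1)
    (hYc : ∀ (ν : ℕ) (a b : Fin p),
      Yc (ν + 1) a b = -(TG.adjoint (Tinv (HG (lp.single 2 0 (eVec p b))))) ν a) :
    HasSum (fun i => (Yc i)ᴴ * Yc i)
      (1 + Matrix.of fun a b : Fin p =>
        (HG.adjoint (Tinv (HG (lp.single 2 0 (eVec p b))))) 0 a) ∧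
    ∀ j : ℕ, 1 ≤ j →
      HasSum (fun i => (Yc i)ᴴ * Yc (i + j))
        (Matrix.of fun a b : Fin p =>
          -∑ c : Fin m, (starRingEnd ℂ) (G 0 c a) *
            (Tinv (HG (lp.single 2 0 (eVec p b)))) (j - 1) c) := by
  classical
  -- notation
  have hsym : ∀ x y : l2 m, (inner ℂ (Tinv x) y : ℂ) = inner ℂ x (Tinv y) := by
    intro x y
    conv_lhs => rw [← hT2 y]
    rw [← ContinuousLinearMap.adjoint_inner_left TG,
      ContinuousLinearMap.adjoint_inner_right, hT2]
  constructor
  · -- j = 0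
    apply hmat
    intro a b
    have key : (inner ℂ (TG.adjoint (Tinv (HG (lp.single 2 0 (eVec p a)))))
        (TG.adjoint (Tinv (HG (lp.single 2 0 (eVec p b))))) : ℂ)
        = (HG.adjoint (Tinv (HG (lp.single 2 0 (eVec p b))))) 0 a := by
      rw [ContinuousLinearMap.adjoint_inner_left, hT2, hsym,
        ← ContinuousLinearMap.adjoint_inner_right HG, coord_eq_inner]
    have htail : HasSum (fun i => ((Yc (i + 1))ᴴ * Yc (i + 1)) a b)
        ((HG.adjoint (Tinv (HG (lp.single 2 0 (eVec p b))))) 0 a) := by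
      have h := lp.hasSum_inner (𝕜 := ℂ)
        (TG.adjoint (Tinv (HG (lp.single 2 0 (eVec p a)))))
        (TG.adjoint (Tinv (HG (lp.single 2 0 (eVec p b)))))
      rw [key] at h
      have heq : (fun i => ((Yc (i + 1))ᴴ * Yc (i + 1)) a b)
          = fun i => (inner ℂ ((TG.adjoint (Tinv (HG (lp.single 2 0 (eVec p a))))) i)
              ((TG.adjoint (Tinv (HG (lp.single 2 0 (eVec p b))))) i) : ℂ) := by
        funext i
        simp [Matrix.mul_apply, Matrix.conjTranspose_apply, hYc, PiLp.inner_apply,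
          RCLike.inner_apply, mul_comm]
      rw [heq]
      exact h
    have hfull := (hasSum_nat_add_iff (f := fun i => ((Yc i)ᴴ * Yc i) a b) 1).1 htail
    have hf0 : ((Yc 0)ᴴ * Yc 0) a b = (1 : Matrix (Fin p) (Fin p) ℂ) a b := by
      rw [hYc0]; simp
    rw [Finset.sum_range_one, hf0] at hfull
    simpa [Matrix.add_apply, Matrix.of_apply, add_comm] using hfull
  · -- j ≥ 1
    intro j hj
    obtain ⟨t, rfl⟩ : ∃ t, j = t + 1 := ⟨j - 1, by omega⟩
    -- intertwining of TG with the forward shift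
    have key1 : ∀ (k : ℕ) (c : Fin p),
        TG (shiftL2 (t + 1) (lp.single 2 k (eVec p c)))
          = shiftL2 (t + 1) (TG (lp.single 2 k (eVec p c))) := by
      intro k c
      rw [shiftL2_single]
      apply lp.ext; funext i
      refine PiLp.ext fun a => ?_
      rw [shiftL2_apply]
      simp only [apply_ite (fun (v : ES m) => v a)]
      rw [hTG, hTG]
      by_cases h1 : t + 1 ≤ i
      · by_cases h2 : k ≤ i - (t + 1)
        · rw [if_pos h1, if_pos h2, if_pos (show k + (t + 1) ≤ i by omega)]
          have hidx : i - (k + (t + 1)) = i - (t + 1) - k := by omega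
          rw [hidx]
        · rw [if_pos h1, if_neg h2, if_neg (show ¬ k + (t + 1) ≤ i by omega)]
      · rw [if_neg h1, if_neg (show ¬ k + (t + 1) ≤ i by omega)]
        simp
    have key2 : ∀ (k : ℕ) (v : ES p),
        TG (shiftL2 (t + 1) (lp.single 2 k v))
          = shiftL2 (t + 1) (TG (lp.single 2 k v)) := by
      intro k v
      rw [lp_single_decomp]
      simp only [map_sum, map_smul, key1]
    have hTW : ∀ f : l2 p, TG (shiftL2 (t + 1) f) = shiftL2 (t + 1) (TG f) := by
      intro f
      have h1 : HasSum (fun k => lp.single 2 k (f k)) f :=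
        lp.hasSum_single ENNReal.ofNat_ne_top f
      have hA := (TG.comp (shiftL2 (t + 1))).hasSum h1
      have hB := (((shiftL2 (t + 1)) : l2 m →L[ℂ] l2 m).comp TG).hasSum h1
      simp only [ContinuousLinearMap.comp_apply] at hA hB
      simp only [key2] at hA
      exact hA.unique hB
    apply hmat
    intro a b
    -- the shifted vector identity
    have hvec : shiftL2 (t + 1) (HG (lp.single 2 0 (eVec p a)))
        - TG (lp.single 2 t (eVec p a))
        = -(lp.single 2 t (WithLp.toLp 2 (fun c => G 0 c a) : ES m) : l2 m) := by
      apply lp.ext; funext i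
      refine PiLp.ext fun c => ?_
      show (shiftL2 (t + 1) (HG (lp.single 2 0 (eVec p a)))) i c
          - (TG (lp.single 2 t (eVec p a))) i c
        = -((lp.single 2 t (WithLp.toLp 2 (fun c => G 0 c a) : ES m) : l2 m) i c)
      rw [shiftL2_apply]
      simp only [apply_ite (fun (v : ES m) => v c)]
      rw [hTG, hHG]
      by_cases h1 : t + 1 ≤ i
      · rw [if_pos h1, if_pos (show t ≤ i by omega),
          lp.single_apply_ne _ _ _ (show i ≠ t by omega)]
        have : i - (t + 1) + 0 + 1 = i - t := by omega
        rw [this, sub_self]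
        simp
      · by_cases h2 : i = t
        · rw [if_neg h1, h2, if_pos (le_refl t), lp.single_apply_self, Nat.sub_self]
          simp
        · rw [if_neg h1, if_neg (show ¬ t ≤ i by omega),
            lp.single_apply_ne _ _ _ h2]
          simp
    -- inner product value for the tail
    have hval : (inner ℂ (shiftL2 (t + 1) (TG.adjoint (Tinv (HG (lp.single 2 0 (eVec p a))))))
        (TG.adjoint (Tinv (HG (lp.single 2 0 (eVec p b))))) : ℂ)
        + ((Yc 0)ᴴ * Yc (0 + (t + 1))) a b
        = -∑ c : Fin m, (starRingEnd ℂ)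
            (G 0 c a) * (Tinv (HG (lp.single 2 0 (eVec p b)))) t c := by
      have hf0 : ((Yc 0)ᴴ * Yc (0 + (t + 1))) a b
          = -(inner ℂ (TG (lp.single 2 t (eVec p a)))
              (Tinv (HG (lp.single 2 0 (eVec p b)))) : ℂ) := by
        have h1 : ((Yc 0)ᴴ * Yc (0 + (t + 1))) a b = Yc (t + 1) a b := by
          rw [hYc0]; simp
        rw [h1, hYc, ← coord_eq_inner, ContinuousLinearMap.adjoint_inner_right]
      rw [hf0, ContinuousLinearMap.adjoint_inner_right, hTW, hT2,
        ← sub_eq_add_neg, ← inner_sub_left, hvec]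
      rw [inner_neg_left, lp.inner_single_left]
      simp [PiLp.inner_apply, RCLike.inner_apply]
      exact Finset.sum_congr rfl fun _ _ => mul_comm _ _
    -- the tail HasSum
    have hts : HasSum (fun i => ((Yc (i + 1))ᴴ * Yc (i + 1 + (t + 1))) a b)
        ((inner ℂ (shiftL2 (t + 1) (TG.adjoint (Tinv (HG (lp.single 2 0 (eVec p a))))))
          (TG.adjoint (Tinv (HG (lp.single 2 0 (eVec p b))))) : ℂ)) := by
      have h := lp.hasSum_inner (𝕜 := ℂ)
        (shiftL2 (t + 1) (TG.adjoint (Tinv (HG (lp.single 2 0 (eVec p a))))))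
        (TG.adjoint (Tinv (HG (lp.single 2 0 (eVec p b)))))
      have h2 := (Function.Injective.hasSum_iff
        (g := fun i : ℕ => i + (t + 1)) (add_left_injective _)
        (f := fun k => (inner ℂ
          ((shiftL2 (t + 1) (TG.adjoint (Tinv (HG (lp.single 2 0 (eVec p a)))))) k)
          ((TG.adjoint (Tinv (HG (lp.single 2 0 (eVec p b))))) k) : ℂ))
        (by
          intro k hk
          have hk' : ¬ t + 1 ≤ k := by
            intro h'; exact hk ⟨k - (t + 1), by change k - (t + 1) + (t + 1) = k; omega⟩
          show (inner ℂ
            ((shiftL2 (t + 1) (TG.adjoint (Tinv (HG (lp.single 2 0 (eVec p a)))))) k)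
            ((TG.adjoint (Tinv (HG (lp.single 2 0 (eVec p b))))) k) : ℂ) = 0
          rw [shiftL2_apply, if_neg hk']
          exact inner_zero_left _)).2 h
      have heq : (fun i => ((Yc (i + 1))ᴴ * Yc (i + 1 + (t + 1))) a b)
          = (fun k => (inner ℂ
            ((shiftL2 (t + 1) (TG.adjoint (Tinv (HG (lp.single 2 0 (eVec p a)))))) k)
            ((TG.adjoint (Tinv (HG (lp.single 2 0 (eVec p b))))) k) : ℂ))
            ∘ (fun i : ℕ => i + (t + 1)) := by
        funext i
        simp only [Function.comp_apply, shiftL2_apply,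
          if_pos (show t + 1 ≤ i + (t + 1) by omega), Nat.add_sub_cancel]
        have hidx : i + 1 + (t + 1) = (i + (t + 1)) + 1 := by omega
        rw [hidx]
        simp [Matrix.mul_apply, Matrix.conjTranspose_apply, hYc, PiLp.inner_apply,
          RCLike.inner_apply, mul_comm]
      rw [heq]
      exact h2
    have hfull := (hasSum_nat_add_iff
      (f := fun i => ((Yc i)ᴴ * Yc (i + (t + 1))) a b) 1).1 hts
    rw [Finset.sum_range_one, hval] at hfull
    simpa [Matrix.of_apply] using hfull
end
end

section
/- Let G ∈ H^∞_{m×p} with T_G T_G* strictly positive, and let Θ₀ be the associated p×(p−m) matrix. Then Θ₀* (I_p + E_p* H_G* (T_G T_G*)⁻¹ H_G E_p) Θ₀ = I_{p−m}. -/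
set_option maxHeartbeats 1000000
open scoped ComplexConjugate ENNReal


/-!
Setting: `l2 n` models ℓ²₊(ℂⁿ); `lp.single 2 0` is the canonical embedding `E_n`, and
evaluating a sequence at coordinate `k` realizes `E_n* (S_n*)^k`.  Block Toeplitz and
Hankel operators, as well as the (bounded) inverse of `T_G T_G*`, are specified through
their actions on the standard basis vectors of the coordinate spaces.
-/

noncomputable section
open scoped Matrix

local notation "⟪" x ", " y "⟫" => @inner ℂ _ _ x y

lemma coordEq {n : ℕ} (y : l2 n) (i : ℕ) (a : Fin n) :
    ⟪lp.single 2 i (eVec n a), y⟫ = y i a := by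
  rw [lp.inner_single_left, EuclideanSpace.inner_single_left]
  simp

lemma es_sum_apply {n : ℕ} {ι : Type*} (s : Finset ι) (f : ι → ES n) (a : Fin n) :
    (∑ b ∈ s, f b) a = ∑ b ∈ s, f b a := by
  induction s using Finset.cons_induction with
  | empty => rfl
  | cons b s hb ih => rw [Finset.sum_cons, Finset.sum_cons, ← ih]; rfl

lemma es_fin_sum {n : ℕ} (v : ES n) (a : Fin n) :
    ∑ b : Fin n, v b * eVec n b a = v a := by
  simp only [EuclideanSpace.single_apply, mul_ite, mul_one, mul_zero]
  rw [Finset.sum_ite_eq Finset.univ a (fun b => v b)]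
  simp

lemma lp_single_coord {n : ℕ} (i : ℕ) (v : ES n) (j : ℕ) (b : Fin n) :
    (lp.single 2 i v : l2 n) j b = if j = i then v b else 0 := by
  rcases eq_or_ne j i with rfl | h
  · rw [if_pos rfl, lp.single_apply_self (E := fun _ : ℕ => ES n)]
  · rw [if_neg h, lp.single_apply_ne (E := fun _ : ℕ => ES n) 2 i v h]
    rfl

lemma lp_sum_coord {n : ℕ} {ι : Type*} (s : Finset ι) (f : ι → l2 n) (j : ℕ) (a : Fin n) :
    (↑(∑ b ∈ s, f b) : ∀ _, ES n) j a = ∑ b ∈ s, (f b : ∀ _, ES n) j a := by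
  rw [lp.coeFn_sum, Finset.sum_apply, es_sum_apply]

lemma single_decomp {n : ℕ} (i : ℕ) (v : ES n) :
    lp.single 2 i v = ∑ b : Fin n, v b • (lp.single 2 i (eVec n b) : l2 n) := by
  apply lp.ext
  funext j
  refine PiLp.ext fun a => ?_
  rw [lp_sum_coord, lp_single_coord]
  have hterm : ∀ b : Fin n, ((v b • (lp.single 2 i (eVec n b) : l2 n)) : ∀ _, ES n) j a
      = v b * (if j = i then eVec n b a else 0) := by
    intro b
    rw [lp.coeFn_smul, Pi.smul_apply, PiLp.smul_apply, smul_eq_mul, lp_single_coord]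
  rw [Finset.sum_congr rfl (fun b _ => hterm b)]
  rcases eq_or_ne j i with rfl | h
  · simp only [if_pos rfl]
    exact (es_fin_sum v a).symm
  · simp [h]

def zup {n : ℕ} (x : l2 n) : l2 n :=
  ⟨fun i => Nat.casesOn i 0 fun k => x k, by
    apply memℓp_gen
    have h := (lp.memℓp x).summable (p := 2) (by norm_num)
    exact (summable_nat_add_iff 1).mp h⟩

@[simp] lemma zup_zero {n : ℕ} (x : l2 n) : (zup x) 0 = 0 := rfl
@[simp] lemma zup_succ {n : ℕ} (x : l2 n) (k : ℕ) : (zup x) (k + 1) = x k := rfl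

lemma inner_zup {n : ℕ} (u x : l2 n) :
    ⟪u, zup x⟫ = ∑' k, ⟪u (k + 1), x k⟫ := by
  have hs : Summable fun i => ⟪u i, (zup x) i⟫ := lp.summable_inner u (zup x)
  rw [lp.inner_eq_tsum, hs.tsum_eq_zero_add]
  simp

section ops
variable {m p : ℕ} {G : ℕ → Matrix (Fin m) (Fin p) ℂ} {TG : l2 p →L[ℂ] l2 m}
  (hTG : ∀ (j : ℕ) (b : Fin p) (i : ℕ) (a : Fin m),
      (TG (lp.single 2 j (eVec p b))) i a = if j ≤ i then G (i - j) a b else 0)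
  {HG : l2 p →L[ℂ] l2 m}
  (hHG : ∀ (j : ℕ) (b : Fin p) (i : ℕ) (a : Fin m),
      (HG (lp.single 2 j (eVec p b))) i a = G (i + j + 1) a b)

/-- conjugated row vector of `G d`. -/
def cvec (G : ℕ → Matrix (Fin m) (Fin p) ℂ) (d : ℕ) (α : Fin m) : ES p :=
  WithLp.toLp 2 (fun b => conj (G d α b))

include hTG in
lemma Tcoord (j : ℕ) (v : ES p) (i : ℕ) (a : Fin m) :
    (TG (lp.single 2 j v)) i a = if j ≤ i then ∑ b, G (i - j) a b * v b else 0 := by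
  rw [single_decomp j v, map_sum]
  rw [lp_sum_coord]
  have hterm : ∀ b : Fin p, ((TG (v b • (lp.single 2 j (eVec p b) : l2 p))) : ∀ _, ES m) i a
      = v b * (if j ≤ i then G (i - j) a b else 0) := by
    intro b
    rw [map_smul, lp.coeFn_smul, Pi.smul_apply, PiLp.smul_apply, smul_eq_mul, hTG]
  rw [Finset.sum_congr rfl (fun b _ => hterm b)]
  by_cases h : j ≤ i
  · simp only [if_pos h]
    exact Finset.sum_congr rfl (fun b _ => mul_comm _ _)
  · simp [h]

include hHG in
lemma Hcoord (j : ℕ) (v : ES p) (i : ℕ) (a : Fin m) :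
    (HG (lp.single 2 j v)) i a = ∑ b, G (i + j + 1) a b * v b := by
  rw [single_decomp j v, map_sum]
  rw [lp_sum_coord]
  have hterm : ∀ b : Fin p, ((HG (v b • (lp.single 2 j (eVec p b) : l2 p))) : ∀ _, ES m) i a
      = v b * G (i + j + 1) a b := by
    intro b
    rw [map_smul, lp.coeFn_smul, Pi.smul_apply, PiLp.smul_apply, smul_eq_mul, hHG]
  rw [Finset.sum_congr rfl (fun b _ => hterm b)]
  exact Finset.sum_congr rfl (fun b _ => mul_comm _ _)

include hTG in
lemma Tadj_single (i : ℕ) (α : Fin m) :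
    TG.adjoint (lp.single 2 i (eVec m α))
      = ∑ l ∈ Finset.range (i + 1), (lp.single 2 l (cvec G (i - l) α) : l2 p) := by
  apply lp.ext
  funext j
  refine PiLp.ext fun b => ?_
  have hl : (↑(TG.adjoint (lp.single 2 i (eVec m α))) : ∀ _, ES p) j b
      = conj ((TG (lp.single 2 j (eVec p b))) i α) := by
    rw [← coordEq, ContinuousLinearMap.adjoint_inner_right, lp.inner_single_right,
      EuclideanSpace.inner_single_right, one_mul]
  rw [hl, hTG, lp_sum_coord]
  have hterm : ∀ l, (↑(lp.single 2 l (cvec G (i - l) α) : l2 p) : ∀ _, ES p) j b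
      = if j = l then conj (G (i - l) α b) else 0 := fun l => lp_single_coord _ _ _ _
  rw [Finset.sum_congr rfl (fun l _ => hterm l)]
  rw [Finset.sum_ite_eq (Finset.range (i + 1)) j (fun l => conj (G (i - l) α b))]
  by_cases h : j ≤ i
  · rw [if_pos h, if_pos (by simpa [Nat.lt_succ_iff] using h)]
  · rw [if_neg h, if_neg (by simpa [Nat.lt_succ_iff] using h), map_zero]

include hTG in
lemma shiftT (l : ℕ) (v : ES p) (x : l2 m) :
    ⟪TG (lp.single 2 (l + 1) v), zup x⟫ = ⟪TG (lp.single 2 l v), x⟫ := by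
  rw [inner_zup, lp.inner_eq_tsum]
  congr 1
  funext k
  congr 1
  refine PiLp.ext fun a => ?_
  rw [Tcoord hTG, Tcoord hTG]
  simp [Nat.succ_le_succ_iff, Nat.succ_sub_succ]

include hTG hHG in
lemma shiftT0 (v : ES p) (x : l2 m) :
    ⟪TG (lp.single 2 0 v), zup x⟫ = ⟪HG (lp.single 2 0 v), x⟫ := by
  rw [inner_zup, lp.inner_eq_tsum]
  congr 1
  funext k
  congr 1
  refine PiLp.ext fun a => ?_
  rw [Tcoord hTG, Hcoord hHG]
  simp

end ops

/-- `Θ₀* (I_p + E_p* H_G* (T_G T_G*)⁻¹ H_G E_p) Θ₀ = I_{p−m}`. -/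
theorem bezout_corona_stmt8
    (m p : ℕ) (hm : 0 < m) (hmp : m ≤ p)
    (G : ℕ → Matrix (Fin m) (Fin p) ℂ)
    (TG : l2 p →L[ℂ] l2 m)
    (hTG : ∀ (j : ℕ) (b : Fin p) (i : ℕ) (a : Fin m),
      (TG (lp.single 2 j (eVec p b))) i a = if j ≤ i then G (i - j) a b else 0)
    (HG : l2 p →L[ℂ] l2 m)
    (hHG : ∀ (j : ℕ) (b : Fin p) (i : ℕ) (a : Fin m),
      (HG (lp.single 2 j (eVec p b))) i a = G (i + j + 1) a b)
    (Tinv : l2 m →L[ℂ] l2 m)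
    (hT1 : ∀ x, Tinv (TG (TG.adjoint x)) = x)
    (hT2 : ∀ x, TG (TG.adjoint (Tinv x)) = x)
    (Θ₀ : Matrix (Fin p) (Fin (p - m)) ℂ)
    (hΘ₀ker : ∀ w : Fin (p - m) → ℂ, Θ₀.mulVec w = 0 → w = 0)
    (hΘ₀ : ∀ (a b : Fin p), (Θ₀ * Θ₀ᴴ) a b
      = (if a = b then 1 else 0) - (TG.adjoint (Tinv (TG (lp.single 2 0 (eVec p b))))) 0 a) :
    Θ₀ᴴ * (1 + Matrix.of fun a b : Fin p =>
        (HG.adjoint (Tinv (HG (lp.single 2 0 (eVec p b))))) 0 a) * Θ₀ = 1 := by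
  classical
  set Bm : Matrix (Fin p) (Fin p) ℂ := Matrix.of fun a b : Fin p =>
      (HG.adjoint (Tinv (HG (lp.single 2 0 (eVec p b))))) 0 a with hBmdef
  set Am : Matrix (Fin p) (Fin p) ℂ := Matrix.of fun a b : Fin p =>
      (TG.adjoint (Tinv (TG (lp.single 2 0 (eVec p b))))) 0 a with hAmdef
  set Um : Matrix (Fin p) (Fin m) ℂ := Matrix.of fun (a : Fin p) (j : Fin m) =>
      ⟪TG (lp.single 2 0 (eVec p a)), Tinv (lp.single 2 0 (eVec m j))⟫ with hUmdef
  set G0 : Matrix (Fin m) (Fin p) ℂ := Matrix.of fun (j : Fin m) (b : Fin p) =>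
      G 0 j b with hG0def
  -- entry formulas as inner products
  have hAm : ∀ a b : Fin p, Am a b
      = ⟪TG (lp.single 2 0 (eVec p a)), Tinv (TG (lp.single 2 0 (eVec p b)))⟫ := by
    intro a b
    show (TG.adjoint (Tinv (TG (lp.single 2 0 (eVec p b))))) 0 a = _
    rw [← coordEq, ContinuousLinearMap.adjoint_inner_right]
  have hBm : ∀ a b : Fin p, Bm a b
      = ⟪HG (lp.single 2 0 (eVec p a)), Tinv (HG (lp.single 2 0 (eVec p b)))⟫ := by
    intro a b
    show (HG.adjoint (Tinv (HG (lp.single 2 0 (eVec p b))))) 0 a = _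
    rw [← coordEq, ContinuousLinearMap.adjoint_inner_right]
  -- the key identity
  have key : ∀ b0 : Fin p,
      TG (TG.adjoint (zup (Tinv (HG (lp.single 2 0 (eVec p b0))))))
        = TG (lp.single 2 0 (eVec p b0)) - lp.single 2 0 (WithLp.toLp 2 (fun j => G 0 j b0) : ES m)
          + ∑ a : Fin p, Bm a b0 • TG (lp.single 2 0 (eVec p a)) := by
    intro b0
    set x := Tinv (HG (lp.single 2 0 (eVec p b0))) with hx
    apply lp.ext
    funext i
    refine PiLp.ext fun α => ?_
    have lhs1 : (↑(TG (TG.adjoint (zup x))) : ∀ _, ES m) i α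
        = ⟪TG (TG.adjoint (lp.single 2 i (eVec m α))), zup x⟫ := by
      rw [← coordEq, ← ContinuousLinearMap.adjoint_inner_left,
        ContinuousLinearMap.adjoint_inner_right]
    have lhs2 : ⟪TG (TG.adjoint (lp.single 2 i (eVec m α))), zup x⟫
        = (∑ l ∈ Finset.range i,
            ⟪TG (lp.single 2 l (cvec G (i - (l + 1)) α)), x⟫)
          + ∑ b : Fin p, G i α b * Bm b b0 := by
      rw [Tadj_single hTG i α, map_sum, sum_inner, Finset.sum_range_succ']
      congr 1
      · exact Finset.sum_congr rfl fun l _ => shiftT hTG l _ x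
      · -- the l = 0 term
        rw [Nat.sub_zero, shiftT0 hTG hHG, single_decomp 0 (cvec G i α), map_sum, sum_inner]
        refine Finset.sum_congr rfl fun b _ => ?_
        rw [map_smul, inner_smul_left]
        have : (starRingEnd ℂ) (cvec G i α b) = G i α b := by
          simp [cvec]
        rw [this, hBm]
    have hsum : (∑ l ∈ Finset.range i,
          ⟪TG (lp.single 2 l (cvec G (i - (l + 1)) α)), x⟫)
        = if h : i = 0 then 0 else G i α b0 := by
      cases i with
      | zero => simp
      | succ i' =>
        rw [dif_neg (Nat.succ_ne_zero i')]
        have h2 : ∑ l ∈ Finset.range (i' + 1),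
            ⟪TG (lp.single 2 l (cvec G (i' + 1 - (l + 1)) α)), x⟫
            = ⟪TG (TG.adjoint (lp.single 2 i' (eVec m α))), x⟫ := by
          rw [Tadj_single hTG i' α, map_sum, sum_inner]
          refine Finset.sum_congr rfl fun l _ => ?_
          rw [Nat.succ_sub_succ]
        rw [h2, ← ContinuousLinearMap.adjoint_inner_right,
          ContinuousLinearMap.adjoint_inner_left, hx, hT2, coordEq, hHG]
    -- right-hand side coordinates
    have rhs : (((TG (lp.single 2 0 (eVec p b0)) - lp.single 2 0 (WithLp.toLp 2 (fun j => G 0 j b0) : ES m)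
          + ∑ a : Fin p, Bm a b0 • TG (lp.single 2 0 (eVec p a)) : l2 m)) : ∀ _, ES m) i α
        = G i α b0 - (if i = 0 then G 0 α b0 else 0)
          + ∑ a : Fin p, Bm a b0 * G i α a := by
      rw [lp.coeFn_add, Pi.add_apply, lp.coeFn_sub, Pi.sub_apply]
      have e1 : ((TG (lp.single 2 0 (eVec p b0)) : l2 m) i
          - (lp.single 2 0 (WithLp.toLp 2 (fun j => G 0 j b0) : ES m) : l2 m) i
          + (↑(∑ a : Fin p, Bm a b0 • TG (lp.single 2 0 (eVec p a))) : ∀ _, ES m) i) α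
          = (TG (lp.single 2 0 (eVec p b0)) : l2 m) i α
            - (lp.single 2 0 (WithLp.toLp 2 (fun j => G 0 j b0) : ES m) : l2 m) i α
            + (↑(∑ a : Fin p, Bm a b0 • TG (lp.single 2 0 (eVec p a))) : ∀ _, ES m) i α := rfl
      rw [e1, hTG, lp_single_coord, lp_sum_coord]
      have e2 : ∀ a : Fin p,
          ((Bm a b0 • TG (lp.single 2 0 (eVec p a))) : ∀ _, ES m) i α
          = Bm a b0 * G i α a := by
        intro a
        rw [lp.coeFn_smul, Pi.smul_apply, PiLp.smul_apply, smul_eq_mul, hTG]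
        simp
      rw [Finset.sum_congr rfl fun a _ => e2 a]
      simp
    rw [lhs1, lhs2, hsum, rhs]
    cases i with
    | zero =>
      rw [dif_pos rfl, if_pos rfl, sub_self, zero_add, zero_add]
      exact Finset.sum_congr rfl fun b _ => mul_comm _ _
    | succ i' =>
      simp only [dif_neg (Nat.succ_ne_zero i'), if_neg (Nat.succ_ne_zero i')]
      rw [sub_zero]
      congr 1
      exact Finset.sum_congr rfl fun b _ => mul_comm _ _
  -- Step: matrix identity  Bm = Am - Um * G0 + Am * Bm
  have M1 : Bm = Am - Um * G0 + Am * Bm := by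
    ext a b0
    have h4 := congrArg (fun y => Tinv y) (key b0)
    simp only [hT1, map_add, map_sub, map_sum, map_smul] at h4
    have h5 := congrArg (fun y => (inner ℂ (TG (lp.single 2 0 (eVec p a))) y : ℂ)) h4
    simp only [inner_add_right, inner_sub_right, inner_sum, inner_smul_right] at h5
    rw [shiftT0 hTG hHG] at h5
    rw [← hBm a b0] at h5
    have hg : (lp.single 2 0 (WithLp.toLp 2 (fun j => G 0 j b0) : ES m) : l2 m)
        = ∑ j : Fin m, G 0 j b0 • (lp.single 2 0 (eVec m j) : l2 m) := single_decomp 0 _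
    rw [hg, map_sum, inner_sum] at h5
    simp only [map_smul, inner_smul_right] at h5
    rw [Matrix.add_apply, Matrix.sub_apply, Matrix.mul_apply, Matrix.mul_apply, h5]
    congr 1
    · congr 1
      · exact (hAm a b0).symm
      · exact Finset.sum_congr rfl fun j _ => mul_comm _ _
    · exact Finset.sum_congr rfl fun a' _ => by rw [← hAm, mul_comm]
  -- Step: Am * G0ᴴ = G0ᴴ
  have hAdj0 : ∀ k : Fin m,
      TG.adjoint (lp.single 2 0 (eVec m k)) = (lp.single 2 0 (cvec G 0 k) : l2 p) := by
    intro k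
    have h := Tadj_single hTG 0 k
    rwa [Finset.sum_range_one] at h
  have hAG : Am * G0ᴴ = G0ᴴ := by
    ext a k
    rw [Matrix.mul_apply]
    have hd : (lp.single 2 0 (cvec G 0 k) : l2 p)
        = ∑ b : Fin p, conj (G 0 k b) • (lp.single 2 0 (eVec p b) : l2 p) := by
      simpa [cvec] using single_decomp 0 (cvec G 0 k)
    have step1 : ∑ b : Fin p, Am a b * (G0ᴴ) b k
        = (inner ℂ (TG (lp.single 2 0 (eVec p a)))
            (Tinv (TG (lp.single 2 0 (cvec G 0 k)))) : ℂ) := by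
      rw [hd, map_sum, map_sum, inner_sum]
      refine Finset.sum_congr rfl fun b _ => ?_
      rw [map_smul, map_smul, inner_smul_right, ← hAm, mul_comm]
      rfl
    rw [step1, ← hAdj0, hT1, lp.inner_single_right, EuclideanSpace.inner_single_right, one_mul]
    have : (TG (lp.single 2 0 (eVec p a))) 0 k = G 0 k a := by
      rw [hTG]; simp
    rw [this]
    rfl
  -- Step: G0 * Θ₀ = 0
  have hΘΘ : Θ₀ * Θ₀ᴴ = 1 - Am := by
    ext a b
    rw [hΘ₀ a b, Matrix.sub_apply, Matrix.one_apply]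
    rfl
  have hG0Θ : G0 * Θ₀ = 0 := by
    open scoped ComplexOrder in
    have h1 : (G0 * Θ₀) * (G0 * Θ₀)ᴴ = 0 := by
      rw [Matrix.conjTranspose_mul, Matrix.mul_assoc, ← Matrix.mul_assoc Θ₀, hΘΘ,
        Matrix.sub_mul, Matrix.one_mul, hAG, sub_self, Matrix.mul_zero]
    exact Matrix.self_mul_conjTranspose_eq_zero.mp h1
  -- Final assembly
  have hfact : (1 - Am) * (1 + Bm) = 1 - Um * G0 := by
    have expand : (1 - Am) * (1 + Bm) = 1 + Bm - Am - Am * Bm := by noncomm_ring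
    rw [expand]
    nth_rewrite 1 [M1]
    abel
  have hcol : Θ₀ * (Θ₀ᴴ * (1 + Bm) * Θ₀ - 1) = 0 := by
    have h2 : Θ₀ * (Θ₀ᴴ * (1 + Bm) * Θ₀) = ((1 - Am) * (1 + Bm)) * Θ₀ := by
      rw [← Matrix.mul_assoc, ← Matrix.mul_assoc, hΘΘ, Matrix.mul_assoc (1 - Am),
        ← Matrix.mul_assoc]
    rw [Matrix.mul_sub, Matrix.mul_one, h2, hfact, Matrix.sub_mul, Matrix.one_mul,
      Matrix.mul_assoc, hG0Θ, Matrix.mul_zero, sub_zero, sub_self]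
  ext a c
  have hz : Θ₀.mulVec (fun r => (Θ₀ᴴ * (1 + Bm) * Θ₀ - 1 : Matrix (Fin (p - m)) (Fin (p - m)) ℂ) r c) = 0 := by
    funext q
    have h := congrFun (congrFun hcol q) c
    simpa [Matrix.mulVec, Matrix.mul_apply, dotProduct] using h
  have h6 := congrFun (hΘ₀ker _ hz) a
  simpa [Matrix.sub_apply, sub_eq_zero] using h6
end
end

section
/- Let G(z) = [1+z, −z], a 1×2 polynomial matrix function (m = 1, p = 2). Then T_G T_G* is strictly positive, and the associated function Y satisfies, for every z ∈ 𝔻, Y(z) = (1/(1+qz)) · [[1−(1−q)z, z], [−(1−q)z, 1+z]], where q = (3−√5)/2; moreover the associated matrix Ξ₀ equals (q/(1−2q)) · (1−q, q)ᵀ. -/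
/-!
Setting: `l2 n` models ℓ²₊(ℂⁿ); `lp.single 2 0` is the canonical embedding `E_n`, and
evaluating a sequence at coordinate `k` realizes `E_n* (S_n*)^k`.  Block Toeplitz and
Hankel operators, as well as the (bounded) inverse of `T_G T_G*`, are specified through
their actions on the standard basis vectors of the coordinate spaces.
-/

noncomputable section
open scoped Matrix
open scoped InnerProductSpace ComplexConjugate

/-- The number `q = (3 − √5)/2`. -/
def qc : ℂ := (((3 - Real.sqrt 5) / 2 : ℝ) : ℂ)

lemma coord_eq_inner {n : ℕ} (x : l2 n) (i : ℕ) (b : Fin n) :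
    x i b = ⟪lp.single 2 i (eVec n b), x⟫_ℂ := by
  rw [lp.inner_single_left, EuclideanSpace.inner_single_left]
  simp

lemma adj_coord {m p : ℕ} (A : l2 p →L[ℂ] l2 m) (x : l2 m) (j : ℕ) (b : Fin p) :
    (ContinuousLinearMap.adjoint A x) j b = ⟪A (lp.single 2 j (eVec p b)), x⟫_ℂ := by
  rw [coord_eq_inner, ContinuousLinearMap.adjoint_inner_right]

lemma apply_coord {m p : ℕ} (A : l2 p →L[ℂ] l2 m) (y : l2 p) (i : ℕ) (a : Fin m) :
    (A y) i a = ∑' j : ℕ, ∑ b : Fin p, (A (lp.single 2 j (eVec p b))) i a * y j b := by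
  rw [coord_eq_inner, ← ContinuousLinearMap.adjoint_inner_left, lp.inner_eq_tsum]
  refine tsum_congr fun j => ?_
  rw [PiLp.inner_apply]
  refine Finset.sum_congr rfl fun b _ => ?_
  rw [RCLike.inner_apply']
  congr 1
  rw [adj_coord, ← inner_conj_symm, starRingEnd_self_apply, ← coord_eq_inner]

lemma norm_sq_eq_tsum {n : ℕ} (x : l2 n) : ‖x‖^2 = ∑' i, ‖x i‖^2 := by
  have h := lp.norm_rpow_eq_tsum (p := 2) (E := fun _ : ℕ => ES n) (by norm_num) x
  simp only [ENNReal.toReal_ofNat] at h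
  rw [show ((2:ℝ)) = ((2:ℕ):ℝ) by norm_num] at h
  simpa [Real.rpow_natCast] using h

lemma summable_norm_sq {n : ℕ} (x : l2 n) : Summable (fun i => ‖x i‖^2) := by
  have h := (lp.hasSum_norm (p := 2) (E := fun _ : ℕ => ES n) (by norm_num) x).summable
  simp only [ENNReal.toReal_ofNat] at h
  rw [show ((2:ℝ)) = ((2:ℕ):ℝ) by norm_num] at h
  simpa [Real.rpow_natCast] using h

lemma ES1_norm (v : ES 1) : ‖v‖ = ‖v 0‖ := by
  rw [EuclideanSpace.norm_eq, Fin.sum_univ_one, Real.sqrt_sq (norm_nonneg _)]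

lemma ES2_norm_sq (v : ES 2) : ‖v‖^2 = ‖v 0‖^2 + ‖v 1‖^2 := by
  rw [EuclideanSpace.norm_eq, Fin.sum_univ_two, Real.sq_sqrt (by positivity)]

lemma hs5 : Real.sqrt 5 ^ 2 = 5 := Real.sq_sqrt (by norm_num)
lemma hs5gt : 2 < Real.sqrt 5 := by nlinarith [hs5, Real.sqrt_nonneg 5]
lemma hs5lt : Real.sqrt 5 < 3 := by nlinarith [hs5, Real.sqrt_nonneg 5]

lemma hqnorm : ‖qc‖ < 1/2 := by
  rw [qc, Complex.norm_real, Real.norm_eq_abs, abs_of_pos (by nlinarith [hs5lt])]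
  nlinarith [hs5gt]

lemma hpoly : qc^2 - 3*qc + 1 = 0 := by
  have h : ((3 - Real.sqrt 5)/2 : ℝ)^2 - 3*((3 - Real.sqrt 5)/2) + 1 = 0 := by nlinarith [hs5]
  rw [qc]
  exact_mod_cast congrArg (fun r : ℝ => (r : ℂ)) h

lemma h1q : (1:ℂ) - qc ≠ 0 := by
  rw [qc, show (1:ℂ) - ((((3 - Real.sqrt 5) / 2 : ℝ)) : ℂ) = ((1 - (3 - Real.sqrt 5)/2 : ℝ) : ℂ) by push_cast; ring]
  exact_mod_cast Complex.ofReal_ne_zero.2 (by nlinarith [hs5gt])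

lemma h2q : (1:ℂ) - 2*qc ≠ 0 := by
  rw [qc, show (1:ℂ) - 2*((((3 - Real.sqrt 5) / 2 : ℝ)) : ℂ) = ((1 - 2*((3 - Real.sqrt 5)/2) : ℝ) : ℂ) by push_cast; ring]
  exact_mod_cast Complex.ofReal_ne_zero.2 (by nlinarith [hs5gt])

lemma ES1_norm' (v : ES 1) : ‖v‖ = ‖v 0‖ := ES1_norm v

def col (c : ℂ) : ES 1 := WithLp.toLp 2 (fun _ => c)
@[simp] lemma col_apply (c : ℂ) (a : Fin 1) : col c a = c := rfl
lemma col_norm (c : ℂ) : ‖col c‖ = ‖c‖ := by rw [ES1_norm]; rfl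

lemma wmem : Memℓp (fun i : ℕ => col ((1 - qc)⁻¹ * (-qc)^i)) 2 := by
  apply memℓp_gen
  have hn : ∀ i : ℕ, ‖col ((1 - qc)⁻¹ * (-qc)^i)‖ = ‖(1-qc)⁻¹‖ * ‖qc‖^i := by
    intro i
    rw [col_norm, norm_mul, norm_pow, norm_neg]
  simp only [ENNReal.toReal_ofNat, hn]
  rw [show ((2:ℝ)) = ((2:ℕ):ℝ) by norm_num]
  simp only [Real.rpow_natCast]
  have : Summable (fun i : ℕ => ‖(1-qc)⁻¹‖^2 * (‖qc‖^2)^i) := by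
    apply Summable.mul_left
    exact summable_geometric_of_lt_one (by positivity) (by nlinarith [hqnorm, norm_nonneg qc])
  convert this using 2 with i
  ring

def wvec : l2 1 := ⟨fun i : ℕ => col ((1 - qc)⁻¹ * (-qc)^i), wmem⟩
lemma wvec_apply (i : ℕ) (a : Fin 1) : wvec i a = (1 - qc)⁻¹ * (-qc)^i := rfl


set_option maxHeartbeats 2000000 in
/-- For `G(z) = [1 + z, −z]` (so `m = 1`, `p = 2`), `T_G T_G*` is
strictly positive (boundedly invertible), and the associated function `Y` equals
`(1/(1+qz)) [[1−(1−q)z, z], [−(1−q)z, 1+z]]` on 𝔻 with `q = (3−√5)/2`; moreover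
`Ξ₀ = (q/(1−2q)) (1−q, q)ᵀ`. -/
theorem bezout_corona_stmt9
    (G : ℕ → Matrix (Fin 1) (Fin 2) ℂ)
    (hG0 : G 0 = !![1, 0]) (hG1 : G 1 = !![1, -1]) (hGn : ∀ ν, 2 ≤ ν → G ν = 0)
    (TG : l2 2 →L[ℂ] l2 1)
    (hTG : ∀ (j : ℕ) (b : Fin 2) (i : ℕ) (a : Fin 1),
      (TG (lp.single 2 j (eVec 2 b))) i a = if j ≤ i then G (i - j) a b else 0)
    (HG : l2 2 →L[ℂ] l2 1)
    (hHG : ∀ (j : ℕ) (b : Fin 2) (i : ℕ) (a : Fin 1),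
      (HG (lp.single 2 j (eVec 2 b))) i a = G (i + j + 1) a b) :
    ∃ Tinv : l2 1 →L[ℂ] l2 1,
      (∀ x, Tinv (TG (TG.adjoint x)) = x) ∧
      (∀ x, TG (TG.adjoint (Tinv x)) = x) ∧
      (∀ z ∈ Metric.ball (0 : ℂ) 1, ∀ a b : Fin 2,
        (if a = b then (1 : ℂ) else 0)
            - z * ∑' i : ℕ, z ^ i *
                (TG.adjoint (Tinv (HG (lp.single 2 0 (eVec 2 b))))) i a
          = ((1 + qc * z)⁻¹ •
              !![1 - (1 - qc) * z, z; -((1 - qc) * z), 1 + z]) a b) ∧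
      (∀ (a : Fin 2) (b : Fin 1),
        (TG.adjoint (Tinv (lp.single 2 0 (eVec 1 b)))) 0 a
          = ((qc / (1 - 2 * qc)) • !![1 - qc; qc]) a b) := by
  classical
  -- coordinates of the adjoint of TG on arbitrary vectors
  have hadj : ∀ (x : l2 1) (j : ℕ) (b : Fin 2),
      (TG.adjoint x) j b = conj (G 0 0 b) * x j 0 + conj (G 1 0 b) * x (j+1) 0 := by
    intro x j b
    rw [adj_coord, lp.inner_eq_tsum]
    rw [tsum_eq_sum (s := {j, j+1}) ?_]
    · rw [Finset.sum_insert (by simp), Finset.sum_singleton]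
      rw [PiLp.inner_apply, PiLp.inner_apply, Fin.sum_univ_one, Fin.sum_univ_one]
      rw [RCLike.inner_apply', RCLike.inner_apply', hTG, hTG]
      rw [if_pos le_rfl, if_pos (Nat.le_succ j), Nat.sub_self,
        Nat.succ_sub le_rfl, Nat.sub_self]
    · intro i hi
      rw [PiLp.inner_apply, Fin.sum_univ_one, RCLike.inner_apply, hTG]
      simp only [Finset.mem_insert, Finset.mem_singleton] at hi
      push_neg at hi
      rcases le_or_gt j i with h | h
      · rw [if_pos h, hGn (i - j) (by omega)]
        simp
      · rw [if_neg (by omega)]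
        simp
  have hadj0 : ∀ (x : l2 1) (j : ℕ), (TG.adjoint x) j 0 = x j 0 + x (j+1) 0 := by
    intro x j
    rw [hadj, hG0, hG1]
    norm_num
  have hadj1 : ∀ (x : l2 1) (j : ℕ), (TG.adjoint x) j 1 = - x (j+1) 0 := by
    intro x j
    rw [hadj, hG0, hG1]
    norm_num
  -- coordinates of TG.adjoint wvec
  have hyw : ∀ (j : ℕ) (b : Fin 2),
      (TG.adjoint wvec) j b = (-qc)^j * (if b = (0 : Fin 2) then 1 else qc * (1-qc)⁻¹) := by
    intro j b
    fin_cases b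
    · show (TG.adjoint wvec) j 0 = (-qc)^j * (if (0 : Fin 2) = (0 : Fin 2) then 1 else qc * (1-qc)⁻¹)
      rw [hadj0, wvec_apply, wvec_apply, if_pos rfl, pow_succ]
      field_simp [h1q]
      ring
    · show (TG.adjoint wvec) j 1 = (-qc)^j * (if (1 : Fin 2) = (0 : Fin 2) then 1 else qc * (1-qc)⁻¹)
      rw [hadj1, wvec_apply, if_neg (by decide), pow_succ]
      field_simp
  -- M w = single 0 e0
  have hsupp : ∀ (i : ℕ) (a : Fin 1) (j : ℕ), j ∉ ({i-1, i} : Finset ℕ) →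
      (∑ b : Fin 2, (TG (lp.single 2 j (eVec 2 b))) i a * (TG.adjoint wvec) j b) = 0 := by
    intro i a j hj
    simp only [Finset.mem_insert, Finset.mem_singleton] at hj
    push_neg at hj
    apply Finset.sum_eq_zero
    intro b _
    rw [hTG]
    rcases le_or_gt j i with h | h
    · rw [if_pos h, hGn (i - j) (by omega)]
      simp
    · rw [if_neg (by omega)]
      simp
  have hMw : TG (TG.adjoint wvec) = (lp.single 2 0 (eVec 1 0) : l2 1) := by
    apply lp.ext
    funext i
    apply PiLp.ext; intro a
    have ha : a = 0 := Subsingleton.elim a 0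
    subst ha
    rw [apply_coord, tsum_eq_sum (s := {i-1, i}) (hsupp i 0)]
    cases i with
    | zero =>
      rw [show ({0-1, 0} : Finset ℕ) = {0} from by decide]
      rw [Finset.sum_singleton, Fin.sum_univ_two, hTG, hTG, hyw, hyw]
      rw [lp.single_apply_self]
      norm_num [hG0, eVec, EuclideanSpace.single_apply]
    | succ k =>
      rw [show ({k+1-1, k+1} : Finset ℕ) = {k, k+1} from by norm_num]
      rw [Finset.sum_insert (by simp), Finset.sum_singleton, Fin.sum_univ_two, Fin.sum_univ_two,
          hTG, hTG, hTG, hTG, hyw, hyw, hyw, hyw]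
      rw [lp.single_apply_ne 2 0 _ (by omega)]
      rw [if_pos (by omega : k ≤ k + 1), if_pos (by omega : k ≤ k + 1),
          if_pos (le_refl (k+1)), if_pos (le_refl (k+1))]
      rw [show k+1-k = 1 by omega, Nat.sub_self, hG0, hG1]
      norm_num
      rw [pow_succ]
      field_simp [h1q]
      linear_combination ((-1:ℂ)^k * qc^k) * hpoly
  -- lower bound
  have hlow : ∀ x : l2 1, ‖x‖^2 ≤ 2 * ‖TG.adjoint x‖^2 := by
    intro x
    rw [norm_sq_eq_tsum, norm_sq_eq_tsum, ← tsum_mul_left]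
    refine Summable.tsum_le_tsum (fun i => ?_) (summable_norm_sq x)
      ((summable_norm_sq (TG.adjoint x)).mul_left 2)
    rw [ES1_norm (x i), ES2_norm_sq ((TG.adjoint x) i), hadj0, hadj1]
    have key : ∀ A B : ℂ, ‖A + B‖^2 ≤ 2*(‖A‖^2 + ‖B‖^2) := by
      intro A B
      have h1 := norm_add_le A B
      nlinarith [norm_nonneg A, norm_nonneg B, sq_nonneg (‖A‖ - ‖B‖), norm_nonneg (A+B)]
    have h := key (x i 0 + x (i+1) 0) (-(x (i+1) 0))
    rw [add_neg_cancel_right] at h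
    exact h
  set M : l2 1 →L[ℂ] l2 1 := TG ∘L TG.adjoint with hMdef
  have hMinner : ∀ x : l2 1, ⟪M x, x⟫_ℂ = ⟪TG.adjoint x, TG.adjoint x⟫_ℂ := by
    intro x
    have : M x = TG (TG.adjoint x) := rfl
    rw [this, ← ContinuousLinearMap.adjoint_inner_right]
  have hbelow : ∀ x : l2 1, ‖x‖ ≤ 2 * ‖M x‖ := by
    intro x
    have h1 : ‖TG.adjoint x‖^2 = RCLike.re ⟪M x, x⟫_ℂ := by
      rw [hMinner]
      exact (inner_self_eq_norm_sq _).symm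
    have h2 : RCLike.re ⟪M x, x⟫_ℂ ≤ ‖M x‖ * ‖x‖ := by
      refine le_trans (RCLike.re_le_norm _) ?_
      exact norm_inner_le_norm _ _
    have h3 := hlow x
    rcases eq_or_lt_of_le (norm_nonneg x) with h | h
    · rw [← h]
      positivity
    · have : ‖x‖ * ‖x‖ ≤ (2 * ‖M x‖) * ‖x‖ := by nlinarith
      exact le_of_mul_le_mul_right this h
  have hanti : AntilipschitzWith 2 M :=
    ContinuousLinearMap.antilipschitz_of_bound M (by exact_mod_cast hbelow)
  have hker : LinearMap.ker (M : l2 1 →ₗ[ℂ] l2 1) = ⊥ := LinearMap.ker_eq_bot.2 hanti.injective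
  have hclosed : IsClosed ((LinearMap.range (M : l2 1 →ₗ[ℂ] l2 1) : Submodule ℂ (l2 1)) : Set (l2 1)) := by
    rw [LinearMap.coe_range]
    exact hanti.isClosed_range M.uniformContinuous
  have horth : (LinearMap.range (M : l2 1 →ₗ[ℂ] l2 1) : Submodule ℂ (l2 1))ᗮ = ⊥ := by
    rw [Submodule.eq_bot_iff]
    intro y hy
    have h0 : ⟪M y, y⟫_ℂ = 0 := hy (M y) (LinearMap.mem_range_self _ y)
    have h1 : TG.adjoint y = 0 := by
      rw [← inner_self_eq_zero (𝕜 := ℂ), ← hMinner, h0]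
    have h2 := hlow y
    rw [h1] at h2
    simp only [norm_zero] at h2
    have : ‖y‖ = 0 := by nlinarith [norm_nonneg y, sq_nonneg ‖y‖]
    exact norm_eq_zero.1 this
  have hrange : LinearMap.range (M : l2 1 →ₗ[ℂ] l2 1) = ⊤ := by
    have h := Submodule.topologicalClosure_eq_top_iff.2 horth
    rwa [IsClosed.submodule_topologicalClosure_eq hclosed] at h
  set Einv := ContinuousLinearEquiv.ofBijective M hker hrange with hE
  have hEapp : ∀ x : l2 1, Einv x = M x := fun x => by
    rw [hE, ContinuousLinearEquiv.coeFn_ofBijective]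
  have hTw : Einv.symm (lp.single 2 0 (eVec 1 0) : l2 1) = wvec := by
    rw [← hMw]
    have : TG (TG.adjoint wvec) = Einv wvec := by rw [hEapp]; rfl
    rw [this, ContinuousLinearEquiv.symm_apply_apply]
  -- images of HG
  have hHG0 : HG (lp.single 2 0 (eVec 2 0)) = (lp.single 2 0 (eVec 1 0) : l2 1) := by
    apply lp.ext
    funext i
    apply PiLp.ext; intro a
    have ha : a = 0 := Subsingleton.elim a 0; subst ha
    rw [hHG]
    cases i with
    | zero =>
      rw [lp.single_apply_self]
      norm_num [hG1, eVec, EuclideanSpace.single_apply]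
    | succ k =>
      rw [hGn (k+1+0+1) (by omega), lp.single_apply_ne 2 0 _ (by omega)]
      simp
  have hHG1 : HG (lp.single 2 0 (eVec 2 1)) = -(lp.single 2 0 (eVec 1 0) : l2 1) := by
    apply lp.ext
    funext i
    apply PiLp.ext; intro a
    have ha : a = 0 := Subsingleton.elim a 0; subst ha
    rw [hHG, lp.coeFn_neg, Pi.neg_apply]
    cases i with
    | zero =>
      rw [lp.single_apply_self]
      norm_num [hG1, eVec, EuclideanSpace.single_apply]
    | succ k =>
      rw [hGn (k+1+0+1) (by omega), lp.single_apply_ne 2 0 _ (by omega)]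
      simp
  -- coordinates
  have hcoord0 : ∀ i : ℕ, (TG.adjoint wvec) i (0 : Fin 2) = (-qc)^i := by
    intro i; rw [hyw, if_pos rfl, mul_one]
  have hcoord1 : ∀ i : ℕ, (TG.adjoint wvec) i (1 : Fin 2) = (-qc)^i * (qc * (1-qc)⁻¹) := by
    intro i; rw [hyw, if_neg (by decide)]
  refine ⟨(Einv.symm : l2 1 →L[ℂ] l2 1), ?_, ?_, ?_, ?_⟩
  · intro x
    have h1 : TG (TG.adjoint x) = Einv x := by rw [hEapp]; rfl
    simp only [ContinuousLinearEquiv.coe_coe, h1, ContinuousLinearEquiv.symm_apply_apply]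
  · intro x
    have h1 : TG (TG.adjoint (Einv.symm x)) = Einv (Einv.symm x) := by rw [hEapp]; rfl
    simp only [ContinuousLinearEquiv.coe_coe, h1, ContinuousLinearEquiv.apply_symm_apply]
  · intro z hz a b
    have hz1 : ‖z‖ < 1 := by simpa using hz
    have hr : ‖-(qc*z)‖ < 1 := by
      rw [norm_neg, norm_mul]
      nlinarith [hqnorm, norm_nonneg z, norm_nonneg qc]
    have hgeo := tsum_geometric_of_norm_lt_one hr
    have h1qz : (1:ℂ) + qc*z ≠ 0 := by
      intro h
      have h2 : -(qc*z) = 1 := by linear_combination -h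
      rw [h2] at hr
      norm_num at hr
    have hsumv : ∀ ca : ℂ, ∑' i : ℕ, z ^ i * ((-qc)^i * ca) = (1 + qc*z)⁻¹ * ca := by
      intro ca
      have h3 : ∀ i : ℕ, z ^ i * ((-qc)^i * ca) = (-(qc*z))^i * ca := by
        intro i
        rw [show -(qc*z) = (-qc)*z by ring, mul_pow]
        ring
      rw [tsum_congr h3, tsum_mul_right, hgeo, sub_neg_eq_add]
    fin_cases b
    · simp only [Fin.zero_eta, Fin.mk_one, ContinuousLinearEquiv.coe_coe, hHG0, hTw]
      fin_cases a <;> simp only [Fin.zero_eta, Fin.mk_one]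
      · have hsum0 : ∑' i : ℕ, z ^ i * (-qc)^i = (1 + qc*z)⁻¹ := by
          simpa using hsumv 1
        simp only [hcoord0, hsum0]
        norm_num [Matrix.smul_apply]
        field_simp [h1qz, (by rw [mul_comm]; exact h1qz : (1:ℂ) + z*qc ≠ 0)]
        ring
      · simp only [hcoord1]
        rw [show (∑' i : ℕ, z ^ i * ((-qc)^i * (qc * (1-qc)⁻¹))) = (1 + qc*z)⁻¹ * (qc * (1-qc)⁻¹) from hsumv _]
        norm_num [Matrix.smul_apply]
        field_simp [h1qz, (by rw [mul_comm]; exact h1qz : (1:ℂ) + z*qc ≠ 0), h1q]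
        linear_combination (-z) * hpoly
    · simp only [Fin.zero_eta, Fin.mk_one, ContinuousLinearEquiv.coe_coe, hHG1, map_neg, hTw, lp.coeFn_neg, Pi.neg_apply, PiLp.neg_apply]
      fin_cases a <;> simp only [Fin.zero_eta, Fin.mk_one]
      · simp only [hcoord0]
        rw [show (∑' i : ℕ, z ^ i * -(-qc)^i) = ∑' i : ℕ, z ^ i * ((-qc)^i * (-1)) from tsum_congr fun i => by ring, hsumv (-1)]
        norm_num [Matrix.smul_apply]
        field_simp [h1qz, (by rw [mul_comm]; exact h1qz : (1:ℂ) + z*qc ≠ 0)]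
      · simp only [hcoord1]
        rw [show (∑' i : ℕ, z ^ i * (-((-qc)^i * (qc * (1-qc)⁻¹)))) = ∑' i : ℕ, z ^ i * ((-qc)^i * (-(qc * (1-qc)⁻¹))) from tsum_congr fun i => by ring, hsumv _]
        norm_num [Matrix.smul_apply]
        field_simp [h1qz, (by rw [mul_comm]; exact h1qz : (1:ℂ) + z*qc ≠ 0), h1q]
        linear_combination (-z) * hpoly
  · intro a b
    have hb : b = 0 := Subsingleton.elim b 0; subst hb
    simp only [ContinuousLinearEquiv.coe_coe, hTw]
    fin_cases a <;> simp only [Fin.zero_eta, Fin.mk_one]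
    · rw [hcoord0]
      norm_num [Matrix.smul_apply]
      field_simp [h2q, (by rw [mul_comm]; exact h2q : (1:ℂ) - qc*2 ≠ 0)]
      linear_combination hpoly
    · rw [hcoord1]
      norm_num [Matrix.smul_apply]
      field_simp [h2q, (by rw [mul_comm]; exact h2q : (1:ℂ) - qc*2 ≠ 0), h1q]
      linear_combination qc * hpoly
end
end
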